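/- arXiv:1908.08226 — 13 statements merged into one kernel-verified Lean document; each statement's English description precedes it below -/
import Mathlib

section
/- Let G be a finite group with trivial center such that there exists a natural number m with |C_G(x)| = m for every non-identity element x of G. Then G is the trivial group. -/
/-- If a finite group `G` has trivial center and all centralizers of non-identity
elements have the same size `m`, then `G` is trivial. -/
theorem trivial_of_constant_centralizer_size (G : Type*) [Group G] [Fintype G]
    (hZ : Subgroup.center G = ⊥) (m : ℕ)
    (h : ∀ x : G, x ≠ 1 → Nat.card (Subgroup.centralizer ({x} : Set G)) = m) :
    ∀ x : G, x = 1 := by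
  intro x
  by_contra hx
  -- m divides card G
  have hm : m ∣ Nat.card G := by
    rw [← h x hx]; exact Subgroup.card_subgroup_dvd_card _
  have hm0 : m ≠ 0 := by
    rw [← h x hx]; exact Nat.card_pos.ne'
  have hG0 : Nat.card G ≠ 0 := Nat.card_pos.ne'
  -- for every prime p, the p-part of card G divides m
  have key : ∀ p : ℕ, p.Prime → p ^ (Nat.card G).factorization p ∣ m := by
    intro p hp
    haveI : Fact p.Prime := ⟨hp⟩
    by_cases hpG : p ∣ Nat.card G
    · obtain ⟨P⟩ : Nonempty (Sylow p G) := inferInstance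
      have hcardP : Nat.card P = p ^ (Nat.card G).factorization p :=
        Sylow.card_eq_multiplicity P
      haveI : Nontrivial (P : Subgroup G) := by
        rw [← Finite.one_lt_card_iff_nontrivial, hcardP]
        exact Nat.one_lt_pow (hp.factorization_pos_of_dvd hG0 hpG).ne' hp.one_lt
      have hpg : IsPGroup p (P : Subgroup G) := P.isPGroup'
      haveI : Nontrivial (Subgroup.center (P : Subgroup G)) := hpg.center_nontrivial
      obtain ⟨z, hz⟩ := exists_ne (1 : Subgroup.center (P : Subgroup G))
      have hz1 : ((z : (P : Subgroup G)) : G) ≠ 1 := by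
        intro hc
        apply hz
        have : (z : (P : Subgroup G)) = 1 := Subtype.ext hc
        exact Subtype.ext this
      have hle : (P : Subgroup G) ≤ Subgroup.centralizer ({((z : (P : Subgroup G)) : G)} : Set G) := by
        intro g hg
        rw [Subgroup.mem_centralizer_singleton_iff]
        have := z.2
        rw [Subgroup.mem_center_iff] at this
        exact congrArg Subtype.val (this ⟨g, hg⟩)
      calc p ^ (Nat.card G).factorization p = Nat.card P := hcardP.symm
        _ ∣ Nat.card (Subgroup.centralizer ({((z : (P : Subgroup G)) : G)} : Set G)) :=
            Subgroup.card_dvd_of_le hle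
        _ = m := h _ hz1
    · rw [Nat.factorization_eq_zero_of_not_dvd hpG]
      simp
  -- hence card G ∣ m, so m = card G
  have hGm : Nat.card G ∣ m := by
    rw [← Nat.factorization_le_iff_dvd hG0 hm0]
    intro p
    by_cases hp : p.Prime
    · exact (Nat.Prime.pow_dvd_iff_le_factorization hp hm0).mp (key p hp)
    · simp [Nat.factorization_eq_zero_of_not_prime _ hp]
  have hmeq : m = Nat.card G := Nat.dvd_antisymm hm hGm
  -- so the centralizer of x is everything, x is central
  have htop : Subgroup.centralizer ({x} : Set G) = ⊤ :=
    Subgroup.eq_top_of_card_eq _ (by rw [h x hx, hmeq])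
  have : x ∈ Subgroup.center G := by
    rw [Subgroup.mem_center_iff]
    intro g
    have hg : g ∈ Subgroup.centralizer ({x} : Set G) := htop ▸ Subgroup.mem_top g
    exact (Subgroup.mem_centralizer_singleton_iff.mp hg)
  rw [hZ, Subgroup.mem_bot] at this
  exact hx this
end

section
/- Let G be a finite non-abelian group and k a natural number. If |C_G(x)| < (k+1) + |Z(G)| for every noncentral element x of G, then |Z(G)| ≤ k. -/
/-- If a finite non-abelian group `G` satisfies `|C_G(x)| < (k+1) + |Z(G)|` for every
noncentral `x` (i.e. `G` is strong `k`-star free), then `|Z(G)| ≤ k`. -/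
theorem center_card_le_of_strong_star_free (G : Type*) [Group G] [Fintype G]
    (hna : ¬ ∀ a b : G, a * b = b * a) (k : ℕ)
    (h : ∀ x : G, x ∉ Subgroup.center G →
      Nat.card (Subgroup.centralizer ({x} : Set G)) <
        (k + 1) + Nat.card (Subgroup.center G)) :
    Nat.card (Subgroup.center G) ≤ k := by
  push_neg at hna
  obtain ⟨a, b, hab⟩ := hna
  have hx : a ∉ Subgroup.center G := by
    intro hc
    exact hab ((Subgroup.mem_center_iff.mp hc b).symm)
  have hle : Subgroup.center G ≤ Subgroup.centralizer ({a} : Set G) :=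
    Subgroup.center_le_centralizer _
  have hdvd : Nat.card (Subgroup.center G) ∣
      Nat.card (Subgroup.centralizer ({a} : Set G)) :=
    Subgroup.card_dvd_of_le hle
  have hmem : a ∈ Subgroup.centralizer ({a} : Set G) := by
    rw [Subgroup.mem_centralizer_iff]
    rintro g rfl
    rfl
  have hlt : Nat.card (Subgroup.center G) <
      Nat.card (Subgroup.centralizer ({a} : Set G)) := by
    have hss : (Subgroup.center G : Set G) ⊂ (Subgroup.centralizer ({a} : Set G) : Set G) :=
      ⟨hle, fun hsub => hx (hsub hmem)⟩
    have := Set.ncard_lt_ncard hss (Set.toFinite _)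
    rw [← Nat.card_coe_set_eq, ← Nat.card_coe_set_eq] at this
    exact this
  have hpos : 0 < Nat.card (Subgroup.center G) := Nat.card_pos
  obtain ⟨m, hm⟩ := hdvd
  have hm2 : 2 ≤ m := by nlinarith [hlt, hm]
  have := h a hx
  nlinarith [this, hm, hm2]
end

section
/- For every natural number k there exists a natural number N such that every finite non-abelian group G satisfying |C_G(x)| < (k+1) + |Z(G)| for all noncentral x in G has |G| ≤ N. In particular, up to isomorphism there are only finitely many finite non-abelian groups whose commuting graph is strong k-star free. -/
open ConjClasses

private lemma two_mul_le_of_dvd_of_lt {d n : ℕ} (h : d ∣ n) (h2 : d < n) : 2 * d ≤ n := by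
  obtain ⟨m, rfl⟩ := h
  rcases Nat.eq_zero_or_pos d with rfl | hd
  · omega
  have hm : 2 ≤ m := by nlinarith
  nlinarith

private lemma orbit_stab {G : Type} [Group G] [Fintype G] (g : G) :
    Nat.card (ConjClasses.mk g).carrier *
      Nat.card (Subgroup.centralizer ({g} : Set G)) = Nat.card G := by
  classical
  rw [Subgroup.nat_card_centralizer_nat_card_stabilizer, ← ConjAct.orbit_eq_carrier_conjClasses]
  simp only [Nat.card_eq_fintype_card]
  rw [MulAction.card_orbit_mul_card_stabilizer_eq_card_group (ConjAct G) g]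
  exact ConjAct.card

/-- For every `k` there is a bound `N` such that every finite non-abelian group that is
strong `k`-star free (i.e. `|C_G(x)| < (k+1) + |Z(G)|` for all noncentral `x`) has order
at most `N`.  In particular, up to isomorphism there are only finitely many finite
non-abelian groups whose commuting graph is strong `k`-star free. -/
theorem strong_star_free_groups_bounded (k : ℕ) :
    ∃ N : ℕ, ∀ (G : Type) [Group G] [Fintype G],
      (¬ ∀ a b : G, a * b = b * a) →
      (∀ x : G, x ∉ Subgroup.center G →
        Nat.card (Subgroup.centralizer ({x} : Set G)) <
          (k + 1) + Nat.card (Subgroup.center G)) →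
      Nat.card G ≤ N := by
  classical
  refine ⟨k * Nat.factorial (2 * k), ?_⟩
  intro G _ _ hNA hSF
  set L := Nat.factorial (2 * k) with hLdef
  set n := Nat.card G with hndef
  set z := Nat.card (Subgroup.center G) with hzdef
  have hn : 0 < n := Nat.card_pos
  have hz : 0 < z := Nat.card_pos
  have hL : 0 < L := Nat.factorial_pos _
  -- for noncentral x, 2z ≤ |C(x)|
  have hcent : ∀ x : G, x ∉ Subgroup.center G →
      2 * z ≤ Nat.card (Subgroup.centralizer ({x} : Set G)) := by
    intro x hx
    apply two_mul_le_of_dvd_of_lt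
      (Subgroup.card_dvd_of_le (Subgroup.center_le_centralizer _))
    have hxc : x ∈ Subgroup.centralizer ({x} : Set G) :=
      Subgroup.mem_centralizer_iff.mpr (by simp)
    have hss : (Subgroup.center G : Set G) ⊂ (Subgroup.centralizer ({x} : Set G) : Set G) :=
      ⟨Subgroup.center_le_centralizer _, fun h => hx (h hxc)⟩
    have := Set.ncard_lt_ncard hss (Set.toFinite _)
    rwa [← Nat.card_coe_set_eq, ← Nat.card_coe_set_eq] at this
  -- there is a noncentral element
  obtain ⟨a, b, hab⟩ : ∃ a b : G, a * b ≠ b * a := by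
    push_neg at hNA; exact hNA
  have ha : a ∉ Subgroup.center G := by
    intro h
    exact hab ((Subgroup.mem_center_iff.mp h b).symm)
  have hZk : z ≤ k := by
    have h1 := hcent a ha
    have h2 := hSF a ha
    omega
  have hC : ∀ x : G, x ∉ Subgroup.center G →
      Nat.card (Subgroup.centralizer ({x} : Set G)) ≤ 2 * k := by
    intro x hx
    have := hSF x hx
    omega
  -- class equation
  haveI : Fintype (ConjClasses G) := Fintype.ofFinite _
  have hCE := Group.nat_card_center_add_sum_card_noncenter_eq_card G
  rw [← Set.coe_toFinset (noncenter G), finsum_mem_coe_finset] at hCE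
  -- each noncentral class size times L is divisible by n
  have hdvd : ∀ x ∈ (noncenter G).toFinset, n ∣ Nat.card x.carrier * L := by
    intro x hx
    rw [Set.mem_toFinset, mem_noncenter] at hx
    obtain ⟨g, rfl⟩ := ConjClasses.exists_rep x
    have hg : g ∉ Subgroup.center G := by
      intro hgZ
      refine (Set.not_subsingleton_iff.mpr hx) ?_
      apply Set.subsingleton_of_subset_singleton (a := g)
      intro h hh
      rw [ConjClasses.mem_carrier_iff_mk_eq, ConjClasses.mk_eq_mk_iff_isConj] at hh
      obtain ⟨c, hc⟩ := hh
      have := Subgroup.mem_center_iff.mp hgZ c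
      simp only [SemiconjBy] at hc
      have : (c : G) * h = (c : G) * g := by
        rw [hc, ← this]
      simpa using mul_left_cancel this
    set c := Nat.card (Subgroup.centralizer ({g} : Set G)) with hcdef
    have hc1 : 0 < c := Nat.card_pos
    have hc2 : c ≤ 2 * k := hC g hg
    obtain ⟨t, ht⟩ : c ∣ L := Nat.dvd_factorial hc1 hc2
    refine ⟨t, ?_⟩
    rw [ht, ← mul_assoc, orbit_stab g]
  have hsd : n ∣ (∑ x ∈ (noncenter G).toFinset, Nat.card x.carrier) * L := by
    rw [Finset.sum_mul]
    exact Finset.dvd_sum fun x hx => hdvd x hx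
  obtain ⟨T, hT⟩ := hsd
  have hzL : z * L + n * T = n * L := by
    calc z * L + n * T
        = z * L + (∑ x ∈ (noncenter G).toFinset, Nat.card x.carrier) * L := by rw [hT]
      _ = (z + ∑ x ∈ (noncenter G).toFinset, Nat.card x.carrier) * L := (add_mul _ _ _).symm
      _ = n * L := by rw [hCE]
  have hTL : T < L := by
    by_contra h
    push_neg at h
    have h1 : n * L ≤ n * T := Nat.mul_le_mul_left n h
    have h2 : 0 < z * L := Nat.mul_pos hz hL
    omega
  have h3 : n * (T + 1) ≤ n * L := Nat.mul_le_mul_left n hTL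
  rw [Nat.mul_add, Nat.mul_one] at h3
  have h4 : n ≤ z * L := by omega
  calc n ≤ z * L := h4
    _ ≤ k * L := Nat.mul_le_mul_right L hZk
end

section
/- Let G be a nontrivial finite group with trivial center such that for every non-identity element x of G, |C_G(x)| = 2 or |C_G(x)| = 3. Then G is isomorphic to S_3, the symmetric group on 3 symbols. -/
open Subgroup

/-- `Equiv.permCongr` as a `MulEquiv`. -/
def permMulEquiv {α β : Type*} (e : α ≃ β) : Equiv.Perm α ≃* Equiv.Perm β :=
  { Equiv.permCongr e with
    map_mul' := by
      intro p q
      ext b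
      simp [Equiv.permCongr, Equiv.Perm.mul_def] }

theorem aux_eq_of_card_two {G : Type*} [Group G] [Fintype G] {H : Subgroup G}
    (hH : Nat.card H = 2) {a b : G} (ha : a ∈ H) (hb : b ∈ H)
    (ha1 : a ≠ 1) (hb1 : b ≠ 1) : a = b := by
  classical
  by_contra hne
  have h3 : 2 < Fintype.card H := by
    rw [Fintype.two_lt_card_iff]
    exact ⟨⟨1, H.one_mem⟩, ⟨a, ha⟩, ⟨b, hb⟩, by simp [Subtype.ext_iff, Ne.symm ha1],
      by simp [Subtype.ext_iff, Ne.symm hb1], by simp [Subtype.ext_iff, hne]⟩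
  rw [← Nat.card_eq_fintype_card, hH] at h3
  omega

/-- A nontrivial finite group with trivial center in which every non-identity element
has centralizer of order `2` or `3` is isomorphic to `S₃`. -/
theorem iso_symmGroup3_of_centralizers (G : Type*) [Group G] [Fintype G]
    (hnt : ∃ x : G, x ≠ 1) (hZ : Subgroup.center G = ⊥)
    (h : ∀ x : G, x ≠ 1 →
      Nat.card (Subgroup.centralizer ({x} : Set G)) = 2 ∨
      Nat.card (Subgroup.centralizer ({x} : Set G)) = 3) :
    Nonempty (G ≃* Equiv.Perm (Fin 3)) := by
  classical
  obtain ⟨x0, hx0⟩ := hnt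
  have hntG : Nontrivial G := ⟨x0, 1, hx0⟩
  -- no subgroup of prime power order > 3
  have key : ∀ K : Subgroup G, 3 < Nat.card K → ∀ p : ℕ, p.Prime → ¬ IsPGroup p K := by
    intro K hK p hp hpK
    have hKnt : Nontrivial K := by
      rw [← Finite.one_lt_card_iff_nontrivial]
      omega
    have hfact : Fact p.Prime := ⟨hp⟩
    haveI := IsPGroup.center_nontrivial hpK
    obtain ⟨⟨⟨z, hzK⟩, hzc⟩, hz1⟩ := exists_ne (1 : Subgroup.center K)
    have hz1' : z ≠ 1 := by
      intro hzz
      apply hz1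
      ext
      simpa using hzz
    have hle : K ≤ Subgroup.centralizer ({z} : Set G) := by
      intro g hg
      rw [Subgroup.mem_centralizer_singleton_iff]
      have h2 := (Subgroup.mem_center_iff.mp hzc ⟨g, hg⟩)
      simpa [Subtype.ext_iff] using h2
    have hcard := Subgroup.card_le_of_le hle
    rcases h z hz1' with hc | hc <;> omega
  -- no prime or prime square > 3 divides card G
  have hnopow : ∀ p k : ℕ, p.Prime → p ^ k ∣ Fintype.card G → p ^ k ≤ 3 := by
    intro p k hp hdvd
    by_contra hlt
    push_neg at hlt
    have hfact : Fact p.Prime := ⟨hp⟩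
    obtain ⟨K, hKcard⟩ := Sylow.exists_subgroup_card_pow_prime (G := G) p
      (by rwa [Nat.card_eq_fintype_card])
    exact key K (by omega) p hp (IsPGroup.of_card hKcard)
  -- card G divides 6
  have hn1 : 1 < Fintype.card G := Fintype.one_lt_card
  have hdvd6 : Fintype.card G ∣ 6 := by
    rw [← Nat.factorization_le_iff_dvd (by omega) (by norm_num), Finsupp.le_def]
    intro p
    by_cases hpp : p.Prime
    · rcases Nat.eq_zero_or_pos ((Fintype.card G).factorization p) with h0 | hfpos
      · simp [h0]
      have hd : p ^ (Fintype.card G).factorization p ∣ Fintype.card G :=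
        Nat.ordProj_dvd _ p
      have hle := hnopow p _ hpp hd
      have hp2 := hpp.two_le
      have hf1 : (Fintype.card G).factorization p = 1 := by
        by_contra hne
        have h2le : 2 ≤ (Fintype.card G).factorization p := by omega
        have : p ^ 2 ≤ p ^ (Fintype.card G).factorization p :=
          Nat.pow_le_pow_right (by omega) h2le
        nlinarith
      have hple : p ≤ 3 := by
        calc p = p ^ 1 := (pow_one p).symm
        _ ≤ 3 := by rw [← hf1]; exact hle
      have hp6 : p ∣ 6 := by interval_cases p <;> norm_num
      have : 0 < (6 : ℕ).factorization p :=
        hpp.factorization_pos_of_dvd (by norm_num) hp6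
      omega
    · simp [Nat.factorization_eq_zero_of_not_prime _ hpp]
  -- card G is not prime
  have hnotprime : ¬ (Fintype.card G).Prime := by
    intro hp
    have hfact : Fact (Fintype.card G).Prime := ⟨hp⟩
    have hcyc : IsCyclic G := isCyclic_of_prime_card (Nat.card_eq_fintype_card.trans rfl)
    letI : CommGroup G := IsCyclic.commGroup
    have htop : Subgroup.center G = ⊤ := CommGroup.center_eq_top
    rw [hZ] at htop
    have : x0 ∈ (⊥ : Subgroup G) := htop ▸ Subgroup.mem_top x0
    exact hx0 (by simpa using this)
  -- card G = 6
  have hsix : Fintype.card G = 6 := by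
    have hle6 : Fintype.card G ≤ 6 := Nat.le_of_dvd (by norm_num) hdvd6
    interval_cases hh : Fintype.card G
    · exact absurd Nat.prime_two hnotprime
    · exact absurd Nat.prime_three hnotprime
    · exact absurd hdvd6 (by norm_num)
    · exact absurd hdvd6 (by norm_num)
    · rfl
  -- take an element of order 2
  have hfact2 : Fact (Nat.Prime 2) := ⟨Nat.prime_two⟩
  obtain ⟨x, hx⟩ := exists_prime_orderOf_dvd_card (G := G) 2 (by rw [hsix]; norm_num)
  have hx1 : x ≠ 1 := by
    intro hxx
    rw [hxx, orderOf_one] at hx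
    omega
  set H : Subgroup G := Subgroup.zpowers x with hHdef
  have hHcard : Nat.card H = 2 := by rw [hHdef, Nat.card_zpowers, hx]
  -- the normal core of H is trivial
  have hcore : H.normalCore = ⊥ := by
    by_contra hne
    obtain ⟨g, hgmem, hg1⟩ : ∃ g ∈ H.normalCore, g ≠ 1 := by
      by_contra hc
      push_neg at hc
      exact hne ((Subgroup.eq_bot_iff_forall _).mpr hc)
    have hgH : g ∈ H := H.normalCore_le hgmem
    have hgx : g = x := aux_eq_of_card_two hHcard hgH (Subgroup.mem_zpowers x) hg1 hx1
    rw [hgx] at hgmem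
    -- g = x is in the normal core, hence x is central
    have hxc : x ∈ Subgroup.center G := by
      rw [Subgroup.mem_center_iff]
      intro a
      have hconj : a * x * a⁻¹ ∈ H.normalCore :=
        Subgroup.normalCore_normal H |>.conj_mem x hgmem a
      have hconj1 : a * x * a⁻¹ ≠ 1 := by
        intro hcc
        apply hx1
        have : x = a⁻¹ * 1 * a := by
          rw [← hcc]; group
        simpa using this
      have heq : a * x * a⁻¹ = x :=
        aux_eq_of_card_two hHcard (H.normalCore_le hconj) (Subgroup.mem_zpowers x)
          hconj1 hx1
      calc a * x = (a * x * a⁻¹) * a := by group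
      _ = x * a := by rw [heq]
    rw [hZ, Subgroup.mem_bot] at hxc
    exact hx1 hxc
  -- the action on the quotient gives an injective hom into Perm (G ⧸ H)
  have hker : (MulAction.toPermHom G (G ⧸ (H : Subgroup G))).ker = ⊥ := by
    rw [← Subgroup.normalCore_eq_ker, hcore]
  have hinj : Function.Injective (MulAction.toPermHom G (G ⧸ (H : Subgroup G))) :=
    (MonoidHom.ker_eq_bot_iff _).mp hker
  -- the quotient has 3 elements
  haveI : Fintype (G ⧸ (H : Subgroup G)) := Fintype.ofFinite _
  have hq3 : Fintype.card (G ⧸ (H : Subgroup G)) = 3 := by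
    have hcardeq := Subgroup.card_eq_card_quotient_mul_card_subgroup H
    rw [hHcard, Nat.card_eq_fintype_card, Nat.card_eq_fintype_card, hsix] at hcardeq
    omega
  let e : (G ⧸ (H : Subgroup G)) ≃ Fin 3 := Fintype.equivFinOfCardEq hq3
  let f : G →* Equiv.Perm (Fin 3) :=
    (permMulEquiv e).toMonoidHom.comp (MulAction.toPermHom G (G ⧸ (H : Subgroup G)))
  have hfinj : Function.Injective f := by
    simpa [f, MonoidHom.coe_comp] using (permMulEquiv e).injective.comp hinj
  have hbij : Function.Bijective f :=
    (Fintype.bijective_iff_injective_and_card f).mpr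
      ⟨hfinj, by simp [hsix, Fintype.card_perm]; rfl⟩
  exact ⟨MulEquiv.ofBijective f hbij⟩
end

section
/- Let G be a nontrivial finite group with trivial center such that for every non-identity element x of G, |C_G(x)| = 2 or |C_G(x)| = 5. Then G is isomorphic to D_{10}, the dihedral group of order 10. -/
lemma aux_orderOf_dvd_centralizer {G : Type*} [Group G] (x : G) :
    orderOf x ∣ Nat.card (Subgroup.centralizer ({x} : Set G)) := by
  have h1 : Subgroup.zpowers x ≤ Subgroup.centralizer ({x} : Set G) :=
    Subgroup.zpowers_le.mpr (by rw [Subgroup.mem_centralizer_iff]; simp)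
  simpa [Nat.card_zpowers] using Subgroup.card_dvd_of_le h1

lemma aux_not_prime_card (G : Type*) [Group G] [Fintype G]
    (hnt : ∃ x : G, x ≠ 1) (hZ : Subgroup.center G = ⊥)
    {p : ℕ} (hp : p.Prime) (hc : Nat.card G = p) : False := by
  haveI : Fact p.Prime := ⟨hp⟩
  haveI : IsCyclic G := isCyclic_of_prime_card hc
  letI : CommGroup G := IsCyclic.commGroup
  obtain ⟨x, hx⟩ := hnt
  have hxc : x ∈ Subgroup.center G := Subgroup.mem_center_iff.mpr fun g => mul_comm g x
  rw [hZ, Subgroup.mem_bot] at hxc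
  exact hx hxc

lemma aux_fact10_2 : (10:ℕ).factorization 2 = 1 := by
  have h : (10:ℕ) = 2 * 5 := rfl
  rw [h, Nat.factorization_mul (by norm_num) (by norm_num)]
  simp [Nat.Prime.factorization, Nat.prime_two, Nat.prime_five]

lemma aux_fact10_5 : (10:ℕ).factorization 5 = 1 := by
  have h : (10:ℕ) = 2 * 5 := rfl
  rw [h, Nat.factorization_mul (by norm_num) (by norm_num)]
  simp [Nat.Prime.factorization, Nat.prime_two, Nat.prime_five]

lemma aux_card_ten (G : Type*) [Group G] [Fintype G]
    (hnt : ∃ x : G, x ≠ 1) (hZ : Subgroup.center G = ⊥)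
    (h : ∀ x : G, x ≠ 1 →
      Nat.card (Subgroup.centralizer ({x} : Set G)) = 2 ∨
      Nat.card (Subgroup.centralizer ({x} : Set G)) = 5) :
    Nat.card G = 10 := by
  set n := Nat.card G with hn
  have hn0 : n ≠ 0 := Nat.card_pos.ne'
  have key : ∀ p : ℕ, p.Prime → p ∣ n → (p = 2 ∨ p = 5) ∧ n.factorization p ≤ 1 := by
    intro p hp hpn
    haveI : Fact p.Prime := ⟨hp⟩
    constructor
    · obtain ⟨x, hx⟩ := exists_prime_orderOf_dvd_card (G := G) p
        (by rwa [← Nat.card_eq_fintype_card])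
      have hx1 : x ≠ 1 := by
        intro he; rw [he, orderOf_one] at hx; exact hp.one_lt.ne' hx.symm
      have hd := aux_orderOf_dvd_centralizer x
      rw [hx] at hd
      rcases h x hx1 with hc | hc <;> rw [hc] at hd
      · exact Or.inl ((Nat.prime_dvd_prime_iff_eq hp Nat.prime_two).mp hd)
      · exact Or.inr ((Nat.prime_dvd_prime_iff_eq hp Nat.prime_five).mp hd)
    · by_contra hk
      push_neg at hk
      set k := n.factorization p with hkdef
      obtain ⟨P⟩ : Nonempty (Sylow p G) := inferInstance
      have hPcard : Nat.card P = p ^ k := P.card_eq_multiplicity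
      haveI hPnt : Nontrivial P := by
        rw [← Finite.one_lt_card_iff_nontrivial, hPcard]
        exact Nat.one_lt_pow (by omega) hp.one_lt
      haveI := P.2.center_nontrivial
      obtain ⟨z, hz1⟩ := exists_ne (1 : Subgroup.center (P : Subgroup G))
      have hzG : ((z : (P : Subgroup G)) : G) ≠ 1 := by
        intro he
        exact hz1 (by ext; exact he)
      have hle : (P : Subgroup G) ≤ Subgroup.centralizer {((z : (P : Subgroup G)) : G)} := by
        intro g hg
        rw [Subgroup.mem_centralizer_iff]
        rintro y rfl
        have := (Subgroup.mem_center_iff.mp z.2) ⟨g, hg⟩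
        exact congrArg Subtype.val this.symm
      have hdvd2 : p ^ k ∣ Nat.card (Subgroup.centralizer {((z : (P : Subgroup G)) : G)}) := by
        rw [← hPcard]; exact Subgroup.card_dvd_of_le hle
      have hpk : p ^ 2 ∣ p ^ k := pow_dvd_pow p (by omega)
      have hp2 := hp.two_le
      rcases h _ hzG with hc | hc <;> rw [hc] at hdvd2 <;>
        have h5 := Nat.le_of_dvd (by norm_num) (hpk.trans hdvd2) <;>
        have hpe : p = 2 := by nlinarith
      · subst hpe; omega
      · subst hpe
        have : (4:ℕ) ∣ 5 := hpk.trans hdvd2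
        omega
  have hdvd : n ∣ 10 := by
    rw [← Nat.factorization_le_iff_dvd hn0 (by norm_num)]
    rw [Finsupp.le_def]
    intro p
    by_cases hp : p.Prime
    · by_cases hpd : p ∣ n
      · obtain ⟨h25, h1⟩ := key p hp hpd
        rcases h25 with rfl | rfl
        · rw [aux_fact10_2]; exact h1
        · rw [aux_fact10_5]; exact h1
      · rw [Nat.factorization_eq_zero_of_not_dvd hpd]; exact Nat.zero_le _
    · rw [Nat.factorization_eq_zero_of_not_prime _ hp]; exact Nat.zero_le _
  have hne1 : n ≠ 1 := by
    obtain ⟨x, hx⟩ := hnt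
    haveI : Nontrivial G := ⟨⟨x, 1, hx⟩⟩
    exact (Finite.one_lt_card_iff_nontrivial.mpr this).ne'
  have hne2 : n ≠ 2 := fun he =>
    aux_not_prime_card G hnt hZ Nat.prime_two he
  have hne5 : n ≠ 5 := fun he =>
    aux_not_prime_card G hnt hZ Nat.prime_five he
  have hle := Nat.le_of_dvd (by norm_num) hdvd
  interval_cases n <;> omega


lemma aux_zmod5 : ∀ u : ZMod 5, u * u = 1 → u = 1 ∨ u = 4 := by decide

lemma aux_orderOf_dvd_centralizer' {G : Type*} [Group G] (x : G) :
    orderOf x ∣ Nat.card (Subgroup.centralizer ({x} : Set G)) := by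
  have h1 : Subgroup.zpowers x ≤ Subgroup.centralizer ({x} : Set G) :=
    Subgroup.zpowers_le.mpr (by rw [Subgroup.mem_centralizer_iff]; simp)
  simpa [Nat.card_zpowers] using Subgroup.card_dvd_of_le h1

lemma aux_rel (G : Type*) [Group G] [Fintype G] (hcard : Nat.card G = 10)
    (h : ∀ x : G, x ≠ 1 →
      Nat.card (Subgroup.centralizer ({x} : Set G)) = 2 ∨
      Nat.card (Subgroup.centralizer ({x} : Set G)) = 5) :
    ∃ a b : G, orderOf a = 5 ∧ orderOf b = 2 ∧ b * a * b⁻¹ = a⁻¹ := by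
  haveI f5 : Fact (Nat.Prime 5) := ⟨by norm_num⟩
  have hfc : Fintype.card G = 10 := by rwa [← Nat.card_eq_fintype_card]
  obtain ⟨a, ha⟩ := exists_prime_orderOf_dvd_card (G := G) 5 (by omega)
  obtain ⟨b, hb⟩ := exists_prime_orderOf_dvd_card (G := G) 2 (by omega)
  refine ⟨a, b, ha, hb, ?_⟩
  have hfact : (Nat.card G).factorization 5 = 1 := by
    rw [hcard]
    have h10 : (10:ℕ) = 2 * 5 := rfl
    rw [h10, Nat.factorization_mul (by norm_num) (by norm_num)]
    simp [Nat.Prime.factorization, Nat.prime_two, Nat.prime_five]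
  have hcz : ∀ x : G, orderOf x = 5 → Nat.card (Subgroup.zpowers x) = 5 ^ (Nat.card G).factorization 5 := by
    intro x hx
    rw [Nat.card_zpowers, hx, hfact, pow_one]
  have hc : orderOf (b * a * b⁻¹) = 5 := by
    rw [show orderOf (b * a * b⁻¹) = orderOf a from by
      simpa using orderOf_injective (MulAut.conj b).toMonoidHom (MulEquiv.injective _) a, ha]
  -- two Sylow 5-subgroups
  set P₁ : Sylow 5 G := Sylow.ofCard (Subgroup.zpowers a) (hcz a ha)
  set P₂ : Sylow 5 G := Sylow.ofCard (Subgroup.zpowers (b * a * b⁻¹)) (hcz _ hc)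
  -- Sylow 5 is unique
  have hsub : Subsingleton (Sylow 5 G) := by
    have h1 := card_sylow_modEq_one 5 G
    have h2 := Sylow.card_dvd_index P₁
    have hidx : (P₁ : Subgroup G).index = 2 := by
      have h3 := Subgroup.card_mul_index (P₁ : Subgroup G)
      have h4 : Nat.card (P₁ : Subgroup G) = 5 := by
        show Nat.card (Sylow.ofCard (Subgroup.zpowers a) (hcz a ha) : Subgroup G) = 5
        rw [Sylow.coe_ofCard, Nat.card_zpowers, ha]
      rw [h4, hcard] at h3
      omega
    rw [hidx] at h2
    have h5 : Nat.card (Sylow 5 G) % 5 = 1 % 5 := h1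
    have h6 : Nat.card (Sylow 5 G) ≤ 2 := Nat.le_of_dvd (by norm_num) h2
    have : Nat.card (Sylow 5 G) = 1 := by omega
    exact Nat.card_eq_one_iff_unique.mp this |>.1
  have heq : (P₂ : Subgroup G) = (P₁ : Subgroup G) := by
    rw [Subsingleton.elim P₂ P₁]
  have hmem : b * a * b⁻¹ ∈ Subgroup.zpowers a := by
    have : b * a * b⁻¹ ∈ (P₂ : Subgroup G) := by
      show b * a * b⁻¹ ∈ (Sylow.ofCard (Subgroup.zpowers (b*a*b⁻¹)) (hcz _ hc) : Subgroup G)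
      rw [Sylow.coe_ofCard]
      exact Subgroup.mem_zpowers _
    rw [heq] at this
    rwa [show (P₁ : Subgroup G) = Subgroup.zpowers a from Sylow.coe_ofCard _ _] at this
  obtain ⟨k, hk⟩ := Subgroup.mem_zpowers_iff.mp hmem
  -- k^2 ≡ 1 mod 5
  have hkk : a ^ (k * k) = a ^ (1:ℤ) := by
    have hbb : b * b = 1 := by rw [← pow_two, ← hb, pow_orderOf_eq_one]
    have h1 : b * a ^ k * b⁻¹ = a ^ (k*k) := by
      calc b * a ^ k * b⁻¹ = (b * a * b⁻¹) ^ k := by rw [conj_zpow]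
        _ = (a ^ k) ^ k := by rw [hk]
        _ = a ^ (k * k) := (zpow_mul a k k).symm
    have h2 : b * (b * a * b⁻¹) * b⁻¹ = (b * b) * a * (b * b)⁻¹ := by group
    rw [hbb] at h2
    simp only [one_mul, inv_one, mul_one] at h2
    rw [hk, h2] at h1
    rw [← h1, zpow_one]
  have hdvd5 : (5:ℤ) ∣ k * k - 1 := by
    have := orderOf_dvd_sub_iff_zpow_eq_zpow.mpr hkk
    rwa [ha] at this
  have hu : ((k : ZMod 5)) * ((k : ZMod 5)) = 1 := by
    have h0 : (((k * k - 1 : ℤ)) : ZMod 5) = 0 := by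
      exact_mod_cast (ZMod.intCast_zmod_eq_zero_iff_dvd _ 5).mpr hdvd5
    push_cast at h0
    linear_combination h0
  have hcases : (k : ZMod 5) = 1 ∨ (k : ZMod 5) = 4 := by
    exact aux_zmod5 _ hu
  have hzpow : ∀ m : ℤ, (k : ZMod 5) = (m : ZMod 5) → a ^ k = a ^ m := by
    intro m hm
    rw [← orderOf_dvd_sub_iff_zpow_eq_zpow, ha]
    exact_mod_cast (ZMod.intCast_zmod_eq_zero_iff_dvd _ 5).mp (by push_cast; rw [hm]; ring)
  rcases hcases with h1 | h4
  · -- contradiction: a and b commute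
    exfalso
    have hba : b * a * b⁻¹ = a := by rw [← hk, hzpow 1 (by exact_mod_cast h1), zpow_one]
    have hcomm : Commute a b := (mul_inv_eq_iff_eq_mul.mp hba).symm
    have hab : orderOf (a * b) = 10 := by
      rw [hcomm.orderOf_mul_eq_mul_orderOf_of_coprime (by rw [ha, hb]; norm_num), ha, hb]
    have habne : a * b ≠ 1 := by
      intro he; rw [he, orderOf_one] at hab; omega
    have := aux_orderOf_dvd_centralizer' (a * b)
    rw [hab] at this
    rcases h _ habne with hc' | hc' <;> rw [hc'] at this <;> omega
  · have hk4 : a ^ k = a ^ (4:ℤ) := hzpow 4 (by exact_mod_cast h4)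
    have ha4 : a ^ (4:ℤ) = a⁻¹ := by
      have h5 : a ^ (5:ℤ) = 1 := by
        rw [show (5:ℤ) = ((5:ℕ):ℤ) from rfl, zpow_natCast, ← ha, pow_orderOf_eq_one]
      rw [← zpow_neg_one, ← orderOf_dvd_sub_iff_zpow_eq_zpow, ha]
      norm_num
    rw [← hk, hk4, ha4]


lemma aux_dihedral_iso (G : Type*) [Group G] [Fintype G] (hcard : Fintype.card G = 10)
    (a b : G) (ha : orderOf a = 5) (hb : orderOf b = 2) (rel : b * a * b⁻¹ = a⁻¹) :
    Nonempty (G ≃* DihedralGroup 5) := by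
  have hbb : b * b = 1 := by rw [← pow_two, ← hb, pow_orderOf_eq_one]
  have hbinv : b⁻¹ = b := by rw [eq_comm, eq_inv_iff_mul_eq_one, hbb]
  have hpow : ∀ m : ℕ, a ^ (m % 5) = a ^ m := by
    intro m; rw [← ha, pow_mod_orderOf]
  have hadd : ∀ i j : ZMod 5, a ^ (i + j).val = a ^ i.val * a ^ j.val := by
    intro i j; rw [ZMod.val_add, hpow, pow_add]
  have hconj : ∀ m : ℕ, b * a ^ m = (a ^ m)⁻¹ * b := by
    intro m
    have h1 : b * a ^ m * b⁻¹ = (a ^ m)⁻¹ := by rw [← conj_pow, rel, inv_pow]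
    rw [← h1]; group
  have hconj' : ∀ m : ℕ, a ^ m * b = b * (a ^ m)⁻¹ := by
    intro m
    have h2 : a ^ m * (b * a ^ m) * (a ^ m)⁻¹ = a ^ m * ((a ^ m)⁻¹ * b) * (a ^ m)⁻¹ := by
      rw [hconj m]
    simpa [mul_assoc] using h2
  have hsub : ∀ i j : ZMod 5, (a ^ i.val)⁻¹ * a ^ j.val = a ^ (j - i).val := by
    intro i j
    rw [inv_mul_eq_iff_eq_mul, ← hadd]
    congr 1; ring
  let f : DihedralGroup 5 → G := fun x => match x with
    | .r i => a ^ i.val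
    | .sr i => b * a ^ i.val
  have hmul : ∀ x y : DihedralGroup 5, f (x * y) = f x * f y := by
    rintro (i | i) (j | j)
    · exact hadd i j
    · show b * a ^ (j - i).val = a ^ i.val * (b * a ^ j.val)
      symm
      calc a ^ i.val * (b * a ^ j.val) = (a ^ i.val * b) * a ^ j.val := by rw [mul_assoc]
        _ = (b * (a ^ i.val)⁻¹) * a ^ j.val := by rw [hconj']
        _ = b * ((a ^ i.val)⁻¹ * a ^ j.val) := by rw [mul_assoc]
        _ = b * a ^ (j - i).val := by rw [hsub]
    · show b * a ^ (i + j).val = b * a ^ i.val * a ^ j.val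
      rw [hadd, mul_assoc]
    · show a ^ (j - i).val = b * a ^ i.val * (b * a ^ j.val)
      symm
      calc b * a ^ i.val * (b * a ^ j.val) = b * ((a ^ i.val * b) * a ^ j.val) := by
            rw [mul_assoc, mul_assoc]
        _ = b * ((b * (a ^ i.val)⁻¹) * a ^ j.val) := by rw [hconj']
        _ = (b * b) * ((a ^ i.val)⁻¹ * a ^ j.val) := by rw [mul_assoc, mul_assoc]
        _ = a ^ (j - i).val := by rw [hbb, one_mul, hsub]
  let F : DihedralGroup 5 →* G :=
    { toFun := f
      map_one' := by show a ^ (0 : ZMod 5).val = 1; simp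
      map_mul' := hmul }
  have hinj : Function.Injective F := by
    rw [injective_iff_map_eq_one]
    rintro (i | i) hx
    · have hx' : a ^ i.val = 1 := hx
      have h5 : (5:ℕ) ∣ i.val := by
        have := orderOf_dvd_of_pow_eq_one hx'; rwa [ha] at this
      have hv : i.val = 0 := Nat.eq_zero_of_dvd_of_lt h5 (ZMod.val_lt i)
      have : i = 0 := by rwa [ZMod.val_eq_zero] at hv
      rw [this]; rfl
    · have hx' : b * a ^ i.val = 1 := hx
      have hbe : b = (a ^ i.val)⁻¹ := by rw [eq_inv_iff_mul_eq_one, hx']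
      have h1 : orderOf b ∣ orderOf a := by
        rw [hbe, orderOf_inv]; exact orderOf_pow_dvd _
      rw [hb, ha] at h1; norm_num at h1
  have hbij : Function.Bijective F := by
    rw [Fintype.bijective_iff_injective_and_card]
    exact ⟨hinj, by rw [DihedralGroup.card, hcard]⟩
  exact ⟨(MulEquiv.ofBijective F hbij).symm⟩


/-- A nontrivial finite group with trivial center in which every non-identity element
has centralizer of order `2` or `5` is isomorphic to the dihedral group `D₁₀`. -/
theorem iso_dihedral10_of_centralizers (G : Type*) [Group G] [Fintype G]
    (hnt : ∃ x : G, x ≠ 1) (hZ : Subgroup.center G = ⊥)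
    (h : ∀ x : G, x ≠ 1 →
      Nat.card (Subgroup.centralizer ({x} : Set G)) = 2 ∨
      Nat.card (Subgroup.centralizer ({x} : Set G)) = 5) :
    Nonempty (G ≃* DihedralGroup 5) := by
  have hcard := aux_card_ten G hnt hZ h
  obtain ⟨a, b, ha, hb, rel⟩ := aux_rel G hcard h
  exact aux_dihedral_iso G (by rw [← Nat.card_eq_fintype_card, hcard]) a b ha hb rel
end

section
/- Let G be a nontrivial finite group with trivial center such that for every non-identity element x of G, |C_G(x)| = 3 or |C_G(x)| = 4. Then G is isomorphic to A_4, the alternating group on 4 symbols. -/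
open Subgroup ConjClasses

lemma card_carrier_mul_card_centralizer (G : Type*) [Group G] [Fintype G] (g : G) :
    Nat.card (ConjClasses.mk g).carrier * Nat.card (Subgroup.centralizer ({g} : Set G)) =
      Nat.card G := by
  classical
  have h1 : Nat.card (Subgroup.centralizer ({g} : Set G)) =
      Nat.card (MulAction.stabilizer (ConjAct G) g) := by
    rw [Subgroup.centralizer_eq_comap_stabilizer]
    have := Subgroup.map_equiv_eq_comap_symm (ConjAct.toConjAct (G := G)).symm
      (MulAction.stabilizer (ConjAct G) g)
    simp only [MulEquiv.symm_symm] at this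
    rw [MulEquiv.toMonoidHom_eq_coe]
    erw [← this]
    exact (Nat.card_congr ((ConjAct.toConjAct (G := G)).symm.subgroupMap _).toEquiv).symm
  rw [h1, ← ConjAct.orbit_eq_carrier_conjClasses]
  simp only [Nat.card_eq_fintype_card]
  rw [MulAction.card_orbit_mul_card_stabilizer_eq_card_group]
  exact (Fintype.card_congr (ConjAct.toConjAct (G := G)).toEquiv).symm

lemma card_eq_twelve (G : Type*) [Group G] [Fintype G]
    (hnt : ∃ x : G, x ≠ 1) (hZ : Subgroup.center G = ⊥)
    (h : ∀ x : G, x ≠ 1 →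
      Nat.card (Subgroup.centralizer ({x} : Set G)) = 3 ∨
      Nat.card (Subgroup.centralizer ({x} : Set G)) = 4) :
    Fintype.card G = 12 := by
  classical
  set n := Fintype.card G with hn
  have hncard : Nat.card G = n := Nat.card_eq_fintype_card
  -- the class equation
  have hce := Group.nat_card_center_add_sum_card_noncenter_eq_card G
  rw [hZ, Subgroup.card_bot, ← Set.coe_toFinset (ConjClasses.noncenter G),
    finsum_mem_coe_finset, hncard] at hce
  -- each noncentral class comes from a non-identity element
  have hrep : ∀ c ∈ (ConjClasses.noncenter G).toFinset, ∃ g : G, g ≠ 1 ∧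
      Nat.card c.carrier * Nat.card (Subgroup.centralizer ({g} : Set G)) = n := by
    intro c hc
    rw [Set.mem_toFinset, ConjClasses.mem_noncenter] at hc
    obtain ⟨g, rfl⟩ := c.exists_rep
    refine ⟨g, ?_, by rw [card_carrier_mul_card_centralizer, hncard]⟩
    rintro rfl
    refine hc.not_subsingleton ?_
    intro a ha b hb
    rw [ConjClasses.mem_carrier_iff_mk_eq, ConjClasses.mk_eq_mk_iff_isConj, isConj_comm,
      isConj_one_right] at ha hb
    rw [ha, hb]
  obtain ⟨m, hm⟩ : ∃ m, n = m := ⟨_, rfl⟩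
  rw [hm] at hce hrep hncard ⊢
  set s := ∑ c ∈ (ConjClasses.noncenter G).toFinset, Nat.card c.carrier with hs
  -- m divides 12
  have hsum : m ∣ 12 * s := by
    rw [hs, Finset.mul_sum]
    refine Finset.dvd_sum fun c hc => ?_
    obtain ⟨g, hg1, hmul⟩ := hrep c hc
    rcases h g hg1 with hc3 | hc4
    · rw [hc3] at hmul; exact ⟨4, by omega⟩
    · rw [hc4] at hmul; exact ⟨3, by omega⟩
  have h12 : m ∣ 12 := by
    have h' := Nat.dvd_sub (dvd_mul_left m 12) hsum
    rwa [show 12 * m - 12 * s = 12 by omega] at h'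
  -- m is not 6
  have hn6 : m ≠ 6 := by
    rintro rfl
    have heven : 2 ∣ s := by
      rw [hs]
      refine Finset.dvd_sum fun c hc => ?_
      obtain ⟨g, hg1, hmul⟩ := hrep c hc
      have hgd : Nat.card (Subgroup.centralizer ({g} : Set G)) ∣ 6 :=
        hncard ▸ Subgroup.card_subgroup_dvd_card _
      rcases h g hg1 with hc3 | hc4
      · rw [hc3] at hmul; omega
      · rw [hc4] at hgd; omega
    omega
  -- final case analysis
  obtain ⟨x, hx⟩ := hnt
  have hdvdx : Nat.card (Subgroup.centralizer ({x} : Set G)) ∣ m :=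
    hncard ▸ Subgroup.card_subgroup_dvd_card _
  have hnex : Nat.card (Subgroup.centralizer ({x} : Set G)) ≠ m := by
    intro he
    have htop : Subgroup.centralizer ({x} : Set G) = ⊤ := by
      refine Subgroup.eq_of_le_of_card_ge le_top ?_
      rw [he, ← hncard]
      exact le_of_eq (Nat.card_congr (Equiv.Set.univ G).symm).symm
    have hxc : x ∈ Subgroup.center G :=
      Subgroup.centralizer_eq_top_iff_subset.mp htop (Set.mem_singleton x)
    rw [hZ, Subgroup.mem_bot] at hxc
    exact hx hxc
  have h1m : 0 < m := by omega
  have hle : m ≤ 12 := Nat.le_of_dvd (by norm_num) h12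
  rcases h x hx with hcx | hcx <;> rw [hcx] at hdvdx hnex <;>
    interval_cases m <;> omega

section Aux

/-- permCongr as a MulEquiv -/
private def permCongrMulEquiv {α β : Type*} (e : α ≃ β) : Equiv.Perm α ≃* Equiv.Perm β :=
  { Equiv.permCongr e with
    map_mul' := fun p q => by ext b; simp [Equiv.permCongr_apply] }

variable (G : Type*) [Group G] [Fintype G]

private lemma sylow_normal_absurd
    (h : ∀ x : G, x ≠ 1 →
      Nat.card (Subgroup.centralizer ({x} : Set G)) = 3 ∨
      Nat.card (Subgroup.centralizer ({x} : Set G)) = 4)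
    (hncard : Nat.card G = 12)
    (P : Sylow 3 G) (hP3 : Nat.card (P : Subgroup G) = 3)
    (hnorm : (P : Subgroup G).Normal) : False := by
  classical
  haveI : Fact (Nat.Prime 3) := ⟨by norm_num⟩
  set K : Subgroup G := (P : Subgroup G) with hK
  obtain ⟨x, hxK, hx1⟩ : ∃ x ∈ K, x ≠ 1 := by
    by_contra hc
    push_neg at hc
    have : K = ⊥ := by
      ext y; simp only [Subgroup.mem_bot]
      exact ⟨fun hy => hc y hy, fun hy => hy ▸ K.one_mem⟩
    rw [this, Subgroup.card_bot] at hP3; omega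
  have hord : orderOf x = 3 := by
    have h1 : orderOf x ∣ 3 := hP3 ▸ Subgroup.orderOf_dvd_natCard K hxK
    exact (Nat.prime_three.eq_one_or_self_of_dvd _ h1).resolve_left
      fun he => hx1 (orderOf_eq_one_iff.mp he)
  have hzp : Subgroup.zpowers x = K := by
    refine Subgroup.eq_of_le_of_card_ge (Subgroup.zpowers_le.mpr hxK) ?_
    rw [hP3, Nat.card_zpowers, hord]
  have hCK : Subgroup.centralizer ({x} : Set G) = K := by
    have hle : K ≤ Subgroup.centralizer ({x} : Set G) := by
      rw [← hzp]
      intro g hg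
      obtain ⟨k, rfl⟩ := Subgroup.mem_zpowers_iff.mp hg
      rw [Subgroup.mem_centralizer_iff]
      intro y hy
      rw [Set.mem_singleton_iff] at hy; rw [hy]
      exact ((Commute.refl x).zpow_right k).eq
    have h3 : (3:ℕ) ∣ Nat.card (Subgroup.centralizer ({x} : Set G)) :=
      hP3 ▸ Subgroup.card_dvd_of_le hle
    rcases h x hx1 with hc | hc
    · exact (Subgroup.eq_of_le_of_card_ge hle (by omega)).symm
    · omega
  let φ : G →* MulAut K := MulAut.conjNormal
  have hker : φ.ker = K := by
    ext g
    simp only [MonoidHom.mem_ker]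
    conv_rhs => rw [← hCK]
    constructor
    · intro hg
      rw [Subgroup.mem_centralizer_iff]
      intro y hy
      rw [Set.mem_singleton_iff] at hy; rw [hy]
      have h1 : ((φ g ⟨x, hxK⟩ : K) : G) = g * x * g⁻¹ := MulAut.conjNormal_apply g ⟨x, hxK⟩
      rw [hg] at h1
      simp only [MulAut.one_apply] at h1
      rw [eq_comm, mul_inv_eq_iff_eq_mul] at h1
      exact h1.symm
    · intro hg
      have hcomm : Commute x g := Subgroup.mem_centralizer_iff.mp hg x rfl
      refine MulEquiv.ext fun k => ?_
      obtain ⟨k, hkK⟩ := k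
      have hkz : k ∈ Subgroup.zpowers x := hzp ▸ hkK
      obtain ⟨m, hm⟩ := Subgroup.mem_zpowers_iff.mp hkz
      refine Subtype.ext ?_
      have h2 : ((φ g ⟨k, hkK⟩ : K) : G) = g * k * g⁻¹ := MulAut.conjNormal_apply g ⟨k, hkK⟩
      rw [h2]
      show g * k * g⁻¹ = k
      rw [← hm]
      have : Commute (x ^ m) g := hcomm.zpow_left m
      rw [mul_inv_eq_iff_eq_mul]
      exact this.eq.symm
  have hkc : Nat.card φ.ker = 3 := by rw [hker]; exact hP3
  have hc := Subgroup.card_eq_card_quotient_mul_card_subgroup φ.ker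
  rw [hncard, hkc] at hc
  have hcyc : IsCyclic K := isCyclic_of_prime_card hP3
  have haut : Nat.card (MulAut K) = 2 := by
    rw [IsCyclic.card_mulAut, hP3]
    decide
  have hdvd : Nat.card (G ⧸ φ.ker) ∣ Nat.card (MulAut K) := by
    rw [Nat.card_congr (QuotientGroup.quotientKerEquivRange φ).toEquiv]
    exact Subgroup.card_subgroup_dvd_card _
  rw [haut] at hdvd
  have hle2 := Nat.le_of_dvd (by norm_num) hdvd
  omega

private lemma main_aux
    (hnt : ∃ x : G, x ≠ 1) (hZ : Subgroup.center G = ⊥)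
    (h : ∀ x : G, x ≠ 1 →
      Nat.card (Subgroup.centralizer ({x} : Set G)) = 3 ∨
      Nat.card (Subgroup.centralizer ({x} : Set G)) = 4)
    (hncard : Nat.card G = 12) :
    Nonempty (G ≃* alternatingGroup (Fin 4)) := by
  classical
  haveI : Fact (Nat.Prime 3) := ⟨by norm_num⟩
  have hP3 : ∀ P : Sylow 3 G, Nat.card (P : Subgroup G) = 3 := by
    intro P
    rw [Sylow.card_eq_multiplicity, hncard]
    rw [show (Nat.factorization 12) 3 = 1 by
      rw [show (12:ℕ) = 3 * 4 by norm_num, Nat.factorization_mul (by norm_num) (by norm_num),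
        Nat.Prime.factorization (by norm_num)]
      simp [Nat.factorization_eq_zero_of_not_dvd (show ¬ (3:ℕ) ∣ 4 by norm_num)]]
    norm_num
  obtain ⟨P⟩ : Nonempty (Sylow 3 G) := inferInstance
  have hPidx : (P : Subgroup G).index = 4 := by
    have := Subgroup.card_mul_index (P : Subgroup G)
    rw [hP3 P, hncard] at this
    omega
  have hdvd4 : Nat.card (Sylow 3 G) ∣ 4 := hPidx ▸ Sylow.card_dvd_index P
  have hmod : Nat.card (Sylow 3 G) % 3 = 1 % 3 := card_sylow_modEq_one 3 G
  have hpos : 0 < Nat.card (Sylow 3 G) := Nat.card_pos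
  have hn4 : Nat.card (Sylow 3 G) = 4 := by
    have hne1 : Nat.card (Sylow 3 G) ≠ 1 := by
      intro h1
      have hnorm : (P : Subgroup G).Normal := by
        rw [← Subgroup.normalizer_eq_top_iff, ← Subgroup.index_eq_one]
        erw [← Sylow.card_eq_index_normalizer P]
        exact h1
      exact sylow_normal_absurd G h hncard P (hP3 P) hnorm
    have hle := Nat.le_of_dvd (by norm_num) hdvd4
    interval_cases (Nat.card (Sylow 3 G)) <;> omega
  have hnormalizer : ∀ Q : Sylow 3 G, Subgroup.normalizer (Q : Set G) = (Q : Subgroup G) := by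
    intro Q
    have hidx : (Subgroup.normalizer (Q : Set G)).index = 4 := by
      rw [← Sylow.card_eq_index_normalizer Q]; exact hn4
    have hcn : Nat.card (Subgroup.normalizer (Q : Set G)) = 3 := by
      have := Subgroup.card_mul_index (Subgroup.normalizer (Q : Set G))
      rw [hidx, hncard] at this
      omega
    exact (Subgroup.eq_of_le_of_card_ge Subgroup.le_normalizer (by erw [hcn, hP3 Q])).symm
  let ψ := MulAction.toPermHom G (Sylow 3 G)
  have hker : ψ.ker = ⊥ := by
    rw [eq_bot_iff]
    intro g hg
    rw [Subgroup.mem_bot]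
    have hgmem : ∀ Q : Sylow 3 G, g ∈ (Q : Subgroup G) := by
      intro Q
      have hsmul : g • Q = Q := by
        have h1 : ψ g = 1 := hg
        have : (ψ g) Q = Q := by rw [h1]; rfl
        exact this
      have := Sylow.smul_eq_iff_mem_normalizer.mp hsmul
      rwa [hnormalizer Q] at this
    by_contra hg1
    haveI : Fintype (Sylow 3 G) := Fintype.ofFinite _
    have hfc : Fintype.card (Sylow 3 G) = 4 := by rw [← Nat.card_eq_fintype_card, hn4]
    haveI hnontriv : Nontrivial (Sylow 3 G) :=
      Fintype.one_lt_card_iff_nontrivial.mp (by omega)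
    obtain ⟨Q1, Q2, hQ⟩ := hnontriv
    have hord3 : orderOf g = 3 := by
      have h1 : orderOf g ∣ 3 := hP3 Q1 ▸ Subgroup.orderOf_dvd_natCard _ (hgmem Q1)
      exact (Nat.prime_three.eq_one_or_self_of_dvd _ h1).resolve_left
        fun he => hg1 (orderOf_eq_one_iff.mp he)
    have hz : ∀ Q : Sylow 3 G, Subgroup.zpowers g = (Q : Subgroup G) := fun Q =>
      Subgroup.eq_of_le_of_card_ge (Subgroup.zpowers_le.mpr (hgmem Q))
        (by rw [hP3 Q, Nat.card_zpowers, hord3])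
    exact hQ (Sylow.ext ((hz Q1).symm.trans (hz Q2)))
  haveI : Fintype (Sylow 3 G) := Fintype.ofFinite _
  have hfc : Fintype.card (Sylow 3 G) = 4 := by rw [← Nat.card_eq_fintype_card, hn4]
  let e : Sylow 3 G ≃ Fin 4 := Fintype.equivFinOfCardEq hfc
  let f : G →* Equiv.Perm (Fin 4) := (permCongrMulEquiv e).toMonoidHom.comp ψ
  have hinj : Function.Injective f := by
    have h1 : Function.Injective ψ := (MonoidHom.ker_eq_bot_iff ψ).mp hker
    have h2 : Function.Injective (permCongrMulEquiv e) := MulEquiv.injective _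
    exact h2.comp h1
  have hrange : Nat.card f.range = 12 := by
    rw [← hncard]
    exact (Nat.card_congr (MonoidHom.ofInjective hinj).toEquiv).symm
  have hperm24 : Nat.card (Equiv.Perm (Fin 4)) = 24 := by
    rw [Nat.card_eq_fintype_card, Fintype.card_perm]
    decide
  have hidx2 : f.range.index = 2 := by
    have := Subgroup.card_mul_index f.range
    rw [hrange, hperm24] at this
    omega
  have halt : alternatingGroup (Fin 4) ≤ f.range := by
    rw [← Equiv.Perm.closure_three_cycles_eq_alternating, Subgroup.closure_le]
    intro σ hσ
    have h3 : orderOf σ = 3 := hσ.orderOf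
    have h4 : (σ ^ 2) ^ 2 = σ := by
      rw [← pow_mul]
      have h31 : σ ^ 3 = 1 := by rw [← h3]; exact pow_orderOf_eq_one σ
      have : σ ^ 4 = σ ^ 3 * σ := by rw [← pow_succ]
      rw [show 2 * 2 = 4 from rfl, this, h31, one_mul]
    exact h4 ▸ Subgroup.sq_mem_of_index_two hidx2 (σ ^ 2)
  have haltcard : Nat.card (alternatingGroup (Fin 4)) = 12 := by
    have h2 := two_mul_card_alternatingGroup (α := Fin 4)
    rw [Fintype.card_perm, show Fintype.card (Fin 4) = 4 from rfl,
      show Nat.factorial 4 = 24 from rfl] at h2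
    rw [Nat.card_eq_fintype_card]
    omega
  have heq : alternatingGroup (Fin 4) = f.range :=
    Subgroup.eq_of_le_of_card_ge halt (by rw [hrange, haltcard])
  exact ⟨(MonoidHom.ofInjective hinj).trans (MulEquiv.subgroupCongr heq.symm)⟩

end Aux


/-- A nontrivial finite group with trivial center in which every non-identity element
has centralizer of order `3` or `4` is isomorphic to the alternating group `A₄`. -/
theorem iso_alternating4_of_centralizers (G : Type*) [Group G] [Fintype G]
    (hnt : ∃ x : G, x ≠ 1) (hZ : Subgroup.center G = ⊥)
    (h : ∀ x : G, x ≠ 1 →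
      Nat.card (Subgroup.centralizer ({x} : Set G)) = 3 ∨
      Nat.card (Subgroup.centralizer ({x} : Set G)) = 4) :
    Nonempty (G ≃* alternatingGroup (Fin 4)) := by
  have hcard := card_eq_twelve G hnt hZ h
  exact main_aux G hnt hZ h (by rw [Nat.card_eq_fintype_card, hcard])
end

section
/- Let G be a nontrivial finite group with trivial center such that for every non-identity element x of G, |C_G(x)| = 4 or |C_G(x)| = 5. Then G is isomorphic to GA(1,5), the general affine group of degree 1 over the field with 5 elements. -/
open Subgroup

private lemma aux_card_units_zmod5 : Nat.card (ZMod 5)ˣ = 4 := by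
  rw [Nat.card_eq_fintype_card]; decide

/-- A nontrivial finite group with trivial center in which every non-identity element
has centralizer of order `4` or `5` is isomorphic to the general affine group
`GA(1,5)`, realized as the group of affine equivalences of `ZMod 5`. -/
theorem iso_GA15_of_centralizers (G : Type*) [Group G] [Fintype G]
    (hnt : ∃ x : G, x ≠ 1) (hZ : Subgroup.center G = ⊥)
    (h : ∀ x : G, x ≠ 1 →
      Nat.card (Subgroup.centralizer ({x} : Set G)) = 4 ∨
      Nat.card (Subgroup.centralizer ({x} : Set G)) = 5) :
    Nonempty (G ≃* ((ZMod 5) ≃ᵃ[ZMod 5] (ZMod 5))) := by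
  classical
  haveI : Nontrivial G := by obtain ⟨x, hx⟩ := hnt; exact ⟨x, 1, hx⟩
  haveI f5 : Fact (Nat.Prime 5) := ⟨by norm_num⟩
  have hcard_pos : Nat.card G ≠ 0 := Nat.card_pos.ne'
  -- order of a nontrivial element divides the cardinality of its centralizer
  have hzle : ∀ x : G, zpowers x ≤ centralizer ({x} : Set G) := by
    intro x g hg
    rw [mem_centralizer_iff]
    rintro s hs
    rcases Set.mem_singleton_iff.mp hs with rfl
    rcases hg with ⟨k, rfl⟩
    exact ((Commute.refl s).zpow_right k).eq
  have horder : ∀ x : G, orderOf x ∣ Nat.card (centralizer ({x} : Set G)) := by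
    intro x
    rw [← Nat.card_zpowers]
    exact card_dvd_of_le (hzle x)
  -- every prime dividing |G| is 2 or 5
  have hprime : ∀ p : ℕ, p.Prime → p ∣ Nat.card G → p = 2 ∨ p = 5 := by
    intro p pp hdvd
    haveI := Fact.mk pp
    obtain ⟨x, hx⟩ := exists_prime_orderOf_dvd_card (G := G) p
      (by rwa [← Nat.card_eq_fintype_card])
    have hx1 : x ≠ 1 := by
      rintro rfl
      rw [orderOf_one] at hx
      exact pp.one_lt.ne' hx.symm
    have hdv := horder x
    rw [hx] at hdv
    rcases h x hx1 with h4 | h5c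
    · rw [h4] at hdv
      left
      exact (Nat.prime_dvd_prime_iff_eq pp (by norm_num)).mp
        (pp.dvd_of_dvd_pow (show p ∣ 2 ^ 2 by simpa using hdv))
    · rw [h5c] at hdv
      right
      exact (Nat.prime_dvd_prime_iff_eq pp (by norm_num)).mp hdv
  -- the p-part of |G| divides 4 or 5
  have hsylow : ∀ p : ℕ, p.Prime →
      p ^ (Nat.card G).factorization p ∣ 4 ∨ p ^ (Nat.card G).factorization p ∣ 5 := by
    intro p pp
    haveI := Fact.mk pp
    by_cases hf : (Nat.card G).factorization p = 0
    · left; rw [hf, pow_zero]; exact one_dvd _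
    obtain ⟨P⟩ : Nonempty (Sylow p G) := inferInstance
    have hcP : Nat.card (P : Subgroup G) = p ^ (Nat.card G).factorization p :=
      P.card_eq_multiplicity
    haveI : Nontrivial (P : Subgroup G) := by
      rw [← Finite.one_lt_card_iff_nontrivial, hcP]
      exact Nat.one_lt_pow hf pp.one_lt
    haveI := P.2.center_nontrivial
    obtain ⟨z, hz1⟩ := exists_ne (1 : center ((P : Subgroup G)))
    set x : G := ((z : (P : Subgroup G)) : G) with hxdef
    have hx1 : x ≠ 1 := by
      simp only [hxdef, ne_eq, OneMemClass.coe_eq_one]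
      exact hz1
    have hle : (P : Subgroup G) ≤ centralizer ({x} : Set G) := by
      intro g hg
      rw [mem_centralizer_iff]
      rintro s hs
      rcases Set.mem_singleton_iff.mp hs with rfl
      have hcz := (mem_center_iff.mp z.2 ⟨g, hg⟩)
      have h' := congrArg Subtype.val hcz
      simp only [Subgroup.coe_mul] at h'
      exact h'.symm
    have hdvd := card_dvd_of_le hle
    rw [hcP] at hdvd
    rcases h x hx1 with h4 | h5c
    · left; rwa [h4] at hdvd
    · right; rwa [h5c] at hdvd
  have h2fact : (Nat.card G).factorization 2 ≤ 2 := by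
    rcases hsylow 2 (by norm_num) with h4 | h5c
    · exact (Nat.pow_dvd_pow_iff_le_right (x := 2) (by norm_num)).mp
        (show 2 ^ (Nat.card G).factorization 2 ∣ 2 ^ 2 by simpa using h4)
    · rcases Nat.eq_zero_or_pos ((Nat.card G).factorization 2) with he | hp
      · omega
      · exact absurd ((dvd_pow_self 2 hp.ne').trans h5c) (by norm_num)
  have h5fact : (Nat.card G).factorization 5 ≤ 1 := by
    rcases hsylow 5 (by norm_num) with h4 | h5c
    · rcases Nat.eq_zero_or_pos ((Nat.card G).factorization 5) with he | hp
      · omega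
      · exact absurd ((dvd_pow_self 5 hp.ne').trans h4) (by norm_num)
    · exact (Nat.pow_dvd_pow_iff_le_right (x := 5) (by norm_num)).mp
        (show 5 ^ (Nat.card G).factorization 5 ∣ 5 ^ 1 by simpa using h5c)
  have hdvd20 : Nat.card G ∣ 20 := by
    rw [← Nat.factorization_le_iff_dvd hcard_pos (by norm_num)]
    intro p
    by_cases pp : p.Prime
    · by_cases pd : p ∣ Nat.card G
      · rcases hprime p pp pd with rfl | rfl
        · calc (Nat.card G).factorization 2 ≤ 2 := h2fact
            _ ≤ (20:ℕ).factorization 2 :=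
              (pp.pow_dvd_iff_le_factorization (by norm_num)).mp (by norm_num)
        · calc (Nat.card G).factorization 5 ≤ 1 := h5fact
            _ ≤ (20:ℕ).factorization 5 :=
              (pp.pow_dvd_iff_le_factorization (by norm_num)).mp (by norm_num)
      · rw [Nat.factorization_eq_zero_of_not_dvd pd]
        exact Nat.zero_le _
    · rw [Nat.factorization_eq_zero_of_not_prime _ pp]
      exact Nat.zero_le _
  -- existence of both kinds of centralizers
  have hex5 : ∃ x : G, x ≠ 1 ∧ Nat.card (centralizer ({x} : Set G)) = 5 := by
    by_contra hq
    push_neg at hq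
    have hpg : IsPGroup 2 G := by
      intro g
      by_cases hg : g = 1
      · exact ⟨0, by simp [hg]⟩
      · refine ⟨2, ?_⟩
        have hd := horder g
        rw [(h g hg).resolve_right (hq g hg)] at hd
        exact orderOf_dvd_iff_pow_eq_one.mp (by simpa using hd)
    haveI := hpg.center_nontrivial
    rw [hZ] at this
    exact false_of_nontrivial_of_subsingleton (⊥ : Subgroup G)
  have hex4 : ∃ x : G, x ≠ 1 ∧ Nat.card (centralizer ({x} : Set G)) = 4 := by
    by_contra hq
    push_neg at hq
    have hpg : IsPGroup 5 G := by
      intro g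
      by_cases hg : g = 1
      · exact ⟨0, by simp [hg]⟩
      · refine ⟨1, ?_⟩
        have hd := horder g
        rw [(h g hg).resolve_left (hq g hg)] at hd
        exact orderOf_dvd_iff_pow_eq_one.mp (by simpa using hd)
    haveI := hpg.center_nontrivial
    rw [hZ] at this
    exact false_of_nontrivial_of_subsingleton (⊥ : Subgroup G)
  obtain ⟨x5, hx51, hx5c⟩ := hex5
  obtain ⟨x4, hx41, hx4c⟩ := hex4
  have hc20 : Nat.card G = 20 := by
    refine Nat.dvd_antisymm hdvd20 ?_
    have d5 : 5 ∣ Nat.card G := hx5c ▸ card_subgroup_dvd_card _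
    have d4 : 4 ∣ Nat.card G := hx4c ▸ card_subgroup_dvd_card _
    exact (Nat.Coprime.mul_dvd_of_dvd_of_dvd (by norm_num) d4 d5 : 4 * 5 ∣ Nat.card G)
  -- an element of order 5
  obtain ⟨u, hu⟩ := exists_prime_orderOf_dvd_card (G := G) 5
    (by rw [← Nat.card_eq_fintype_card, hc20]; norm_num)
  have hu1 : u ≠ 1 := by
    intro e; rw [e, orderOf_one] at hu; norm_num at hu
  have hPcard : Nat.card (zpowers u) = 5 := by rw [Nat.card_zpowers, hu]
  -- the centralizer of u is exactly ⟨u⟩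
  have hCu : centralizer ({u} : Set G) = zpowers u := by
    have hd : (5:ℕ) ∣ Nat.card (centralizer ({u} : Set G)) :=
      hPcard ▸ card_dvd_of_le (hzle u)
    rcases h u hu1 with h4 | h5c
    · rw [h4] at hd; norm_num at hd
    · exact (eq_of_le_of_card_ge (hzle u) (by rw [h5c, hPcard])).symm
  -- ⟨u⟩ is normal
  have hPnormal : (zpowers u).Normal := by
    have hP5 : IsPGroup 5 (zpowers u) := IsPGroup.of_card (by rw [hPcard, pow_one])
    obtain ⟨Q, hPQ⟩ := hP5.exists_le_sylow
    have hfac : (20:ℕ).factorization 5 = 1 := by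
      have h1 : (5:ℕ)^1 ∣ 20 := by norm_num
      have h2 : ¬ (5:ℕ)^2 ∣ 20 := by norm_num
      have a := (f5.out.pow_dvd_iff_le_factorization (by norm_num)).mp h1
      have b : ¬ 2 ≤ (20:ℕ).factorization 5 := fun hle =>
        h2 ((f5.out.pow_dvd_iff_le_factorization (by norm_num)).mpr hle)
      omega
    have hQcard : Nat.card (Q : Subgroup G) = 5 := by
      rw [Q.card_eq_multiplicity, hc20, hfac, pow_one]
    have hPQeq : zpowers u = (Q : Subgroup G) :=
      eq_of_le_of_card_ge hPQ (by rw [hQcard, hPcard])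
    have hnum : Nat.card (Sylow 5 G) = 1 := by
      have hdix : Nat.card (Sylow 5 G) ∣ (Q : Subgroup G).index := Q.card_dvd_index
      have hix : (Q : Subgroup G).index = 4 := by
        have hmi := card_mul_index (Q : Subgroup G)
        rw [hQcard, hc20] at hmi
        omega
      rw [hix] at hdix
      have hmod := card_sylow_modEq_one 5 G
      have hle4 : Nat.card (Sylow 5 G) ≤ 4 := Nat.le_of_dvd (by norm_num) hdix
      have hpos : 0 < Nat.card (Sylow 5 G) := Nat.card_pos
      interval_cases hn : (Nat.card (Sylow 5 G)) <;> revert hdix hmod <;> decide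
    haveI : Subsingleton (Sylow 5 G) := (Nat.card_eq_one_iff_unique.mp hnum).1
    rw [hPQeq, ← normalizer_eq_top_iff, eq_top_iff']
    intro g
    exact Sylow.smul_eq_iff_mem_normalizer.mp (Subsingleton.elim _ _)
  -- the complement Q = C(x4)
  set Qc := centralizer ({x4} : Set G) with hQcdef
  have hcomp : IsComplement' (zpowers u) Qc :=
    isComplement'_of_coprime (by rw [hPcard, hx4c, hc20]) (by rw [hPcard, hx4c]; norm_num)
  have hdisj : zpowers u ⊓ Qc = ⊥ :=
    inf_eq_bot_of_coprime (by rw [hPcard, hx4c]; norm_num)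
  -- exponent bookkeeping
  have hW : ∀ x y : ℕ, x % 5 = y % 5 → u ^ x = u ^ y := by
    intro x y hxy
    rw [pow_eq_pow_iff_modEq, hu]
    exact hxy
  have hEinj : ∀ c d : ZMod 5, u ^ c.val = u ^ d.val → c = d := by
    intro c d hcd
    rw [pow_eq_pow_iff_modEq, hu] at hcd
    have : c.val % 5 = d.val % 5 := hcd
    rw [Nat.mod_eq_of_lt c.val_lt, Nat.mod_eq_of_lt d.val_lt] at this
    exact ZMod.val_injective 5 this
  have hEadd : ∀ c d : ZMod 5, u ^ (c + d).val = u ^ c.val * u ^ d.val := by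
    intro c d
    rw [← pow_add]
    exact hW _ _ (by rw [ZMod.val_add]; omega)
  have hEmul : ∀ c d : ZMod 5, u ^ (c * d).val = (u ^ c.val) ^ d.val := by
    intro c d
    rw [← pow_mul]
    exact hW _ _ (by rw [ZMod.val_mul]; omega)
  have hE1 : u ^ (1 : ZMod 5).val = u := by
    rw [ZMod.val_one, pow_one]
  have hmemE : ∀ c : ZMod 5, u ^ c.val ∈ zpowers u := fun c => pow_mem (mem_zpowers u) _
  -- the "multiplier" map a
  have haex : ∀ g : G, ∃ c : ZMod 5, g * u * g⁻¹ = u ^ c.val := by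
    intro g
    have hmem : g * u * g⁻¹ ∈ zpowers u := hPnormal.conj_mem u (mem_zpowers u) g
    obtain ⟨n, hn⟩ := (Submonoid.mem_powers_iff _ _).mp
      (mem_powers_iff_mem_zpowers.mpr hmem)
    exact ⟨(n : ZMod 5), by rw [← hn]; exact (hW _ _ (by rw [ZMod.val_natCast]; omega)).symm⟩
  choose a ha using haex
  have hamul : ∀ g g' : G, a (g * g') = a g * a g' := by
    intro g g'
    apply hEinj
    rw [← ha (g * g')]
    have h1 : (g * g') * u * (g * g')⁻¹ = g * (g' * u * g'⁻¹) * g⁻¹ := by group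
    rw [h1, ha g', ← conj_pow, ha g, ← hEmul]
  have haP : ∀ c : ZMod 5, a (u ^ c.val) = 1 := by
    intro c
    apply hEinj
    rw [← ha, hE1]
    have : Commute (u ^ c.val) u := (Commute.refl u).pow_left _
    rw [this.eq]
    group
  have ha1 : a 1 = 1 := by
    have := haP 0
    rwa [ZMod.val_zero, pow_zero] at this
  have hane : ∀ g : G, a g ≠ 0 := by
    intro g e
    apply hu1
    have hg := ha g
    rw [e, ZMod.val_zero, pow_zero] at hg
    have : u = g⁻¹ * (g * u * g⁻¹) * g := by group
    rw [hg] at this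
    simpa using this
  have hainv : ∀ g : G, a g⁻¹ = (a g)⁻¹ := by
    intro g
    have := hamul g g⁻¹
    rw [mul_inv_cancel, ha1] at this
    field_simp [hane g] at this ⊢
    linear_combination -this
  have hacomm : ∀ g : G, a g = 1 → g ∈ centralizer ({u} : Set G) := by
    intro g hg
    have h1 := ha g
    rw [hg, hE1] at h1
    rw [mem_centralizer_iff]
    intro s hs
    rw [Set.mem_singleton_iff] at hs
    rw [hs]
    have h2 := congrArg (· * g) h1
    have h3 : g * u = u * g := by simpa [mul_assoc] using h2
    exact h3.symm
  -- decomposition g = u^b(g) * q(g)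
  have hdec := fun g : G => hcomp.existsUnique g
  choose pq hpq hpquniq using hdec
  have hbex : ∀ g : G, ∃ c : ZMod 5, ((pq g).1 : G) = u ^ c.val := by
    intro g
    have hmem : ((pq g).1 : G) ∈ zpowers u := (pq g).1.2
    obtain ⟨n, hn⟩ := (Submonoid.mem_powers_iff _ _).mp
      (mem_powers_iff_mem_zpowers.mpr hmem)
    exact ⟨(n : ZMod 5), by rw [← hn]; exact (hW _ _ (by rw [ZMod.val_natCast]; omega)).symm⟩
  choose b hb using hbex
  have hbq : ∀ (c : ZMod 5) (y : G), y ∈ Qc → ∀ g : G, g = u ^ c.val * y →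
      b g = c ∧ ((pq g).2 : G) = y := by
    intro c y hy g hg
    have heq := hpquniq g ⟨⟨u ^ c.val, hmemE c⟩, ⟨y, hy⟩⟩ hg.symm
    constructor
    · apply hEinj
      rw [← hb g, ← heq]
    · rw [← heq]
  have hgdec : ∀ g : G, g = u ^ (b g).val * ((pq g).2 : G) := by
    intro g
    rw [← hb g]
    exact (hpq g).symm
  have haq : ∀ g : G, a ((pq g).2 : G) = a g := by
    intro g
    conv_rhs => rw [hgdec g]
    rw [hamul, haP, one_mul]
  have hbmul : ∀ g g' : G, b (g * g') = b g + a g * b g' := by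
    intro g g'
    have hqq : ((pq g).2 : G) * ((pq g').2 : G) ∈ Qc :=
      mul_mem (pq g).2.2 (pq g').2.2
    have hconj : ((pq g).2 : G) * u ^ (b g').val * ((pq g).2 : G)⁻¹
        = u ^ ((a g * b g').val) := by
      rw [← conj_pow, ha, haq, ← hEmul]
    have hcalc : g * g' = u ^ ((b g + a g * b g').val)
        * (((pq g).2 : G) * ((pq g').2 : G)) := by
      conv_lhs => rw [hgdec g, hgdec g']
      rw [hEadd, ← hconj]
      group
    exact (hbq _ _ hqq _ hcalc).1
  -- the homomorphism
  have hφapp : ∀ (g : G) (x : ZMod 5),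
      ((LinearEquiv.smulOfNeZero (ZMod 5) (ZMod 5) (a g) (hane g)).toAffineEquiv.trans
        (AffineEquiv.constVAdd (ZMod 5) (ZMod 5) (b g))) x = b g + a g * x := by
    intro g x
    simp [AffineEquiv.trans_apply, AffineEquiv.constVAdd,
      LinearEquiv.smulOfNeZero, LinearEquiv.smulOfUnit, Units.smul_def]
    rfl
  set φ' : G →* ((ZMod 5) ≃ᵃ[ZMod 5] (ZMod 5)) := MonoidHom.mk'
    (fun g => (LinearEquiv.smulOfNeZero (ZMod 5) (ZMod 5) (a g) (hane g)).toAffineEquiv.trans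
        (AffineEquiv.constVAdd (ZMod 5) (ZMod 5) (b g)))
    (by
      intro g g'
      apply AffineEquiv.ext
      intro x
      simp only [AffineEquiv.mul_def, AffineEquiv.trans_apply, hφapp,
        AffineEquiv.constVAdd, LinearEquiv.smulOfNeZero, LinearEquiv.smulOfUnit,
        Units.smul_def, hbmul, hamul]
      simp [Units.smul_def]
      show _ = b g + a g * (b g' + a g' * x)
      ring) with hphi'def
  have hφ'app : ∀ (g : G) (x : ZMod 5), φ' g x = b g + a g * x := hφapp
  have hinj : Function.Injective φ' := by
    rw [injective_iff_map_eq_one]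
    intro g hg
    have h0 : (0 : ZMod 5) = b g + a g * 0 := by rw [← hφ'app, hg]; rfl
    have h1 : (1 : ZMod 5) = b g + a g * 1 := by rw [← hφ'app, hg]; rfl
    have h0 := h0.symm
    have h1 := h1.symm
    have hb0 : b g = 0 := by simpa using h0
    have ha1' : a g = 1 := by
      rw [hb0] at h1
      simpa using h1
    have hgP : g ∈ zpowers u := by
      rw [← hCu]
      exact hacomm g ha1'
    have hgQ : g ∈ Qc := by
      have := hgdec g
      rw [hb0, ZMod.val_zero, pow_zero, one_mul] at this
      rw [this]
      exact (pq g).2.2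
    have : g ∈ (⊥ : Subgroup G) := hdisj ▸ mem_inf.mpr ⟨hgP, hgQ⟩
    simpa using this
  -- surjectivity of a restricted to Qc
  have hAbij : Function.Bijective
      (fun q : Qc => Units.mk0 (a (q : G)) (hane _)) := by
    rw [Nat.bijective_iff_injective_and_card]
    constructor
    · intro q1 q2 hq
      have hq' : a (q1 : G) = a (q2 : G) := by
        have := congrArg Units.val hq
        simpa using this
      have h1 : a ((q1 : G) * (q2 : G)⁻¹) = 1 := by
        rw [hamul, hainv, hq', mul_inv_cancel₀ (hane _)]
      have hP : (q1 : G) * (q2 : G)⁻¹ ∈ zpowers u := by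
        rw [← hCu]; exact hacomm _ h1
      have hQ : (q1 : G) * (q2 : G)⁻¹ ∈ Qc := mul_mem q1.2 (inv_mem q2.2)
      have : (q1 : G) * (q2 : G)⁻¹ ∈ (⊥ : Subgroup G) :=
        hdisj ▸ mem_inf.mpr ⟨hP, hQ⟩
      have : (q1 : G) = (q2 : G) := by
        rw [mem_bot] at this
        exact mul_inv_eq_one.mp this
      exact Subtype.ext this
    · rw [hx4c, aux_card_units_zmod5]
  have hsurj : Function.Surjective φ' := by
    intro f
    set c : ZMod 5 := f.linear 1 with hcdef
    have hc0 : c ≠ 0 := by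
      intro e
      have : (1 : ZMod 5) = 0 := f.linear.injective (by rw [← hcdef, e, map_zero])
      exact one_ne_zero this
    obtain ⟨q0, hq0⟩ := hAbij.2 (Units.mk0 c hc0)
    have haq0 : a (q0 : G) = c := by
      have := congrArg Units.val hq0
      simpa using this
    set g : G := u ^ ((f 0 : ZMod 5)).val * (q0 : G) with hgdef
    have hbg : b g = f 0 := (hbq (f 0) (q0 : G) q0.2 g rfl).1
    have hag : a g = c := by
      rw [hgdef, hamul, haP, one_mul, haq0]
    refine ⟨g, ?_⟩
    apply AffineEquiv.ext
    intro x
    have hlin : ∀ y : ZMod 5, f.linear y = y * c := by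
      intro y
      rw [hcdef, ← smul_eq_mul, ← map_smul, smul_eq_mul, mul_one]
    have hfx : f x = x * c + f 0 := by
      have hd := AffineMap.decomp (f : (ZMod 5) →ᵃ[ZMod 5] (ZMod 5))
      have := congrFun hd x
      simpa [hlin] using this
    show φ' g x = f x
    rw [hφ'app, hbg, hag, hfx]
    ring
  exact ⟨MulEquiv.ofBijective φ' ⟨hinj, hsurj⟩⟩
end

section
/- Let G be a finite non-abelian group with nontrivial center (|Z(G)| ≥ 2) such that |C_G(x)| < 3 + |Z(G)| for every noncentral element x (i.e., G is strong 2-star free). Then |C_G(x)| = 4 for every noncentral x in G. -/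
/-- If a finite non-abelian group `G` has nontrivial center and is strong `2`-star free
(i.e. `|C_G(x)| < 3 + |Z(G)|` for every noncentral `x`), then every noncentral element
has centralizer of order `4`. -/
theorem centralizer_eq_four_of_strong_two_star_free (G : Type*) [Group G] [Fintype G]
    (hna : ¬ ∀ a b : G, a * b = b * a)
    (hZ : 2 ≤ Nat.card (Subgroup.center G))
    (h : ∀ x : G, x ∉ Subgroup.center G →
      Nat.card (Subgroup.centralizer ({x} : Set G)) <
        3 + Nat.card (Subgroup.center G)) :
    ∀ x : G, x ∉ Subgroup.center G →
      Nat.card (Subgroup.centralizer ({x} : Set G)) = 4 := by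
  intro x hx
  have hle : Subgroup.center G ≤ Subgroup.centralizer ({x} : Set G) :=
    Subgroup.center_le_centralizer _
  have hxC : x ∈ Subgroup.centralizer ({x} : Set G) :=
    Subgroup.mem_centralizer_iff.mpr (by simp)
  have hdvd : Nat.card (Subgroup.center G) ∣ Nat.card (Subgroup.centralizer ({x} : Set G)) :=
    Subgroup.card_dvd_of_le hle
  have hlt : Nat.card (Subgroup.center G) < Nat.card (Subgroup.centralizer ({x} : Set G)) := by
    have hss : (Subgroup.center G : Set G) ⊂ (Subgroup.centralizer ({x} : Set G) : Set G) :=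
      ⟨hle, fun hsub => hx (hsub hxC)⟩
    have := Set.ncard_lt_ncard hss (Set.toFinite _)
    simpa only [← SetLike.coe_sort_coe, Nat.card_coe_set_eq] using this
  have hub := h x hx
  obtain ⟨k, hk⟩ := hdvd
  have hk2 : 2 ≤ k := by
    rcases k with _ | _ | k
    · simp at hk; omega
    · simp at hk; omega
    · omega
  have h2Z : 2 * Nat.card (Subgroup.center G) ≤
      Nat.card (Subgroup.centralizer ({x} : Set G)) := by
    rw [hk, mul_comm 2]
    exact Nat.mul_le_mul_left _ hk2
  have hZ2 : Nat.card (Subgroup.center G) = 2 := by omega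
  rw [hZ2] at hk hub
  omega
end

section
/- Let G be a finite non-abelian group with nontrivial center (|Z(G)| ≥ 2) such that |C_G(x)| < 3 + |Z(G)| for every noncentral element x (i.e., G is strong 2-star free). Then G is isomorphic to D_8 or to Q_8. -/
section PowLemmas

variable {G : Type*} [Group G] {x y : G}

lemma ypw_add (h4 : orderOf y = 4) (i j : ZMod 4) :
    y ^ (i + j).val = y ^ i.val * y ^ j.val := by
  have hmod := pow_mod_orderOf y (i.val + j.val)
  rw [h4] at hmod
  rw [← pow_add, ZMod.val_add, hmod]

lemma ypw_neg (h4 : orderOf y = 4) (i : ZMod 4) :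
    y ^ (-i).val = (y ^ i.val)⁻¹ := by
  rw [eq_inv_iff_mul_eq_one, ← ypw_add h4, neg_add_cancel, ZMod.val_zero, pow_zero]

lemma ypw_inj (h4 : orderOf y = 4) {i j : ZMod 4} (h : y ^ i.val = y ^ j.val) : i = j := by
  apply ZMod.val_injective
  have := pow_eq_pow_iff_modEq.mp h
  rw [h4] at this
  have h1 := Nat.mod_eq_of_lt (ZMod.val_lt i)
  have h2 := Nat.mod_eq_of_lt (ZMod.val_lt j)
  unfold Nat.ModEq at this
  omega

lemma ypw_x (h4 : orderOf y = 4) (hxy : x * y * x⁻¹ = y⁻¹) (i : ZMod 4) :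
    x * y ^ i.val = y ^ (-i).val * x := by
  rw [ypw_neg h4]
  have h1 : x * y ^ i.val * x⁻¹ = (y ^ i.val)⁻¹ := by
    rw [← conj_pow, hxy, inv_pow]
  calc x * y ^ i.val = (x * y ^ i.val * x⁻¹) * x := by group
    _ = (y ^ i.val)⁻¹ * x := by rw [h1]

lemma ypw_mem (i : ZMod 4) : y ^ i.val ∈ Subgroup.zpowers y :=
  Subgroup.pow_mem _ (Subgroup.mem_zpowers y) _

end PowLemmas

lemma dihedral_aux {G : Type*} [Group G] [Fintype G] (hcard : Fintype.card G = 8)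
    {x y : G} (h4 : orderOf y = 4) (hxy : x * y * x⁻¹ = y⁻¹) (hx2 : x ^ 2 = 1)
    (hxmem : x ∉ Subgroup.zpowers y) : Nonempty (G ≃* DihedralGroup 4) := by
  let f : DihedralGroup 4 → G := fun d => match d with
    | .r i => y ^ i.val
    | .sr i => x * y ^ i.val
  have hmul : ∀ d1 d2 : DihedralGroup 4, f (d1 * d2) = f d1 * f d2 := by
    rintro (i | i) (j | j)
    · exact ypw_add h4 i j
    · show x * y ^ (j - i).val = y ^ i.val * (x * y ^ j.val)
      have hc : y ^ i.val * x = x * y ^ (-i).val := by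
        rw [ypw_x h4 hxy (-i), neg_neg]
      calc x * y ^ (j - i).val = x * (y ^ (-i).val * y ^ j.val) := by
            rw [← ypw_add h4, sub_eq_neg_add j i]
        _ = (x * y ^ (-i).val) * y ^ j.val := by rw [mul_assoc]
        _ = y ^ i.val * (x * y ^ j.val) := by rw [← hc, mul_assoc]
    · show x * y ^ (i + j).val = (x * y ^ i.val) * y ^ j.val
      rw [ypw_add h4, mul_assoc]
    · show y ^ (j - i).val = (x * y ^ i.val) * (x * y ^ j.val)
      have hc : y ^ i.val * x = x * y ^ (-i).val := by
        rw [ypw_x h4 hxy (-i), neg_neg]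
      symm
      calc (x * y ^ i.val) * (x * y ^ j.val)
          = x * (y ^ i.val * x) * y ^ j.val := by group
        _ = x * (x * y ^ (-i).val) * y ^ j.val := by rw [hc]
        _ = x ^ 2 * (y ^ (-i).val * y ^ j.val) := by simp only [pow_two]; group
        _ = y ^ (j - i).val := by
            rw [hx2, one_mul, ← ypw_add h4, sub_eq_neg_add j i]
  let F : DihedralGroup 4 →* G := MonoidHom.mk' f hmul
  have hinj : Function.Injective F := by
    rintro (i | i) (j | j) hij
    · exact congrArg _ (ypw_inj h4 hij)
    · exfalso; apply hxmem
      have hx' : x = y ^ i.val * (y ^ j.val)⁻¹ := by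
        rw [show y ^ i.val = x * y ^ j.val from hij]; group
      rw [hx']
      exact Subgroup.mul_mem _ (ypw_mem i) (Subgroup.inv_mem _ (ypw_mem j))
    · exfalso; apply hxmem
      have hij' : x * y ^ i.val = y ^ j.val := hij
      have hx' : x = y ^ j.val * (y ^ i.val)⁻¹ := by
        rw [← hij']; group
      rw [hx']
      exact Subgroup.mul_mem _ (ypw_mem j) (Subgroup.inv_mem _ (ypw_mem i))
    · have : y ^ i.val = y ^ j.val := mul_left_cancel hij
      exact congrArg _ (ypw_inj h4 this)
  have hbij : Function.Bijective F := by
    rw [Fintype.bijective_iff_injective_and_card]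
    exact ⟨hinj, by rw [DihedralGroup.card, hcard]⟩
  exact ⟨(MulEquiv.ofBijective F hbij).symm⟩


lemma quaternion_aux {G : Type*} [Group G] [Fintype G] (hcard : Fintype.card G = 8)
    {x y : G} (h4 : orderOf y = 4) (hxy : x * y * x⁻¹ = y⁻¹) (hx2 : x ^ 2 = y ^ 2)
    (hxmem : x ∉ Subgroup.zpowers y) : Nonempty (G ≃* QuaternionGroup 2) := by
  have ypw_add : ∀ i j : ZMod 4, y ^ (i + j).val = y ^ i.val * y ^ j.val := by
    intro i j
    have hmod := pow_mod_orderOf y (i.val + j.val)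
    rw [h4] at hmod
    rw [← pow_add, ZMod.val_add, hmod]
  have ypw_neg : ∀ i : ZMod 4, y ^ (-i).val = (y ^ i.val)⁻¹ := by
    intro i
    rw [eq_inv_iff_mul_eq_one, ← ypw_add, neg_add_cancel, ZMod.val_zero, pow_zero]
  have ypw_inj : ∀ {i j : ZMod 4}, y ^ i.val = y ^ j.val → i = j := by
    intro i j hEq
    apply ZMod.val_injective
    have := pow_eq_pow_iff_modEq.mp hEq
    rw [h4] at this
    have h1 := Nat.mod_eq_of_lt (ZMod.val_lt i)
    have h2 := Nat.mod_eq_of_lt (ZMod.val_lt j)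
    unfold Nat.ModEq at this
    omega
  have ypw_x : ∀ i : ZMod 4, x * y ^ i.val = y ^ (-i).val * x := by
    intro i
    rw [ypw_neg]
    have h1 : x * y ^ i.val * x⁻¹ = (y ^ i.val)⁻¹ := by
      rw [← conj_pow, hxy, inv_pow]
    calc x * y ^ i.val = (x * y ^ i.val * x⁻¹) * x := by group
      _ = (y ^ i.val)⁻¹ * x := by rw [h1]
  have ypw_mem : ∀ i : ZMod 4, y ^ i.val ∈ Subgroup.zpowers y :=
    fun i => Subgroup.pow_mem _ (Subgroup.mem_zpowers y) _
  let f : QuaternionGroup 2 → G := fun d => match d with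
    | .a i => y ^ i.val
    | .xa i => x * y ^ i.val
  have hmul : ∀ d1 d2 : QuaternionGroup 2, f (d1 * d2) = f d1 * f d2 := by
    rintro (i | i) (j | j)
    · exact ypw_add i j
    · show x * y ^ (j - i).val = y ^ i.val * (x * y ^ j.val)
      have hc : y ^ i.val * x = x * y ^ (-i).val := by
        rw [ypw_x (-i), neg_neg]
      calc x * y ^ (j - i).val = x * (y ^ (-i).val * y ^ j.val) := by
            rw [← ypw_add, sub_eq_neg_add j i]
        _ = (x * y ^ (-i).val) * y ^ j.val := by rw [mul_assoc]
        _ = y ^ i.val * (x * y ^ j.val) := by rw [← hc, mul_assoc]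
    · show x * y ^ (i + j).val = (x * y ^ i.val) * y ^ j.val
      rw [ypw_add, mul_assoc]
    · show y ^ (((2 : ℕ) : ZMod (2 * 2)) + j - i).val = (x * y ^ i.val) * (x * y ^ j.val)
      have hc : y ^ i.val * x = x * y ^ (-i).val := by
        rw [ypw_x (-i), neg_neg]
      have h2v : y ^ (((2 : ℕ) : ZMod (2 * 2))).val = y ^ 2 := by
        congr 1
      symm
      calc (x * y ^ i.val) * (x * y ^ j.val)
          = x * (y ^ i.val * x) * y ^ j.val := by group
        _ = x * (x * y ^ (-i).val) * y ^ j.val := by rw [hc]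
        _ = x ^ 2 * (y ^ (-i).val * y ^ j.val) := by simp only [pow_two]; group
        _ = y ^ (((2 : ℕ) : ZMod (2 * 2))).val * y ^ (j - i).val := by
            rw [hx2, ← ypw_add, sub_eq_neg_add j i, h2v]
        _ = y ^ (((2 : ℕ) : ZMod (2 * 2)) + (j - i)).val := (ypw_add _ _).symm
        _ = y ^ (((2 : ℕ) : ZMod (2 * 2)) + j - i).val := by rw [add_sub_assoc]
  let F : QuaternionGroup 2 →* G := MonoidHom.mk' f hmul
  have hinj : Function.Injective F := by
    rintro (i | i) (j | j) hij
    · exact congrArg _ (ypw_inj hij)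
    · exfalso; apply hxmem
      have hx' : x = y ^ i.val * (y ^ j.val)⁻¹ := by
        rw [show y ^ i.val = x * y ^ j.val from hij]; group
      rw [hx']
      exact Subgroup.mul_mem _ (ypw_mem i) (Subgroup.inv_mem _ (ypw_mem j))
    · exfalso; apply hxmem
      have hij' : x * y ^ i.val = y ^ j.val := hij
      have hx' : x = y ^ j.val * (y ^ i.val)⁻¹ := by
        rw [← hij']; group
      rw [hx']
      exact Subgroup.mul_mem _ (ypw_mem j) (Subgroup.inv_mem _ (ypw_mem i))
    · have : y ^ i.val = y ^ j.val := mul_left_cancel hij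
      exact congrArg _ (ypw_inj this)
  have hbij : Function.Bijective F := by
    rw [Fintype.bijective_iff_injective_and_card]
    refine ⟨hinj, ?_⟩
    rw [QuaternionGroup.card, hcard]
  exact ⟨(MulEquiv.ofBijective F hbij).symm⟩



/-- A finite non-abelian group with nontrivial center that is strong `2`-star free
(i.e. `|C_G(x)| < 3 + |Z(G)|` for every noncentral `x`) is isomorphic to `D₈` or `Q₈`. -/
theorem iso_D8_or_Q8_of_strong_two_star_free (G : Type*) [Group G] [Fintype G]
    (hna : ¬ ∀ a b : G, a * b = b * a)
    (hZ : 2 ≤ Nat.card (Subgroup.center G))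
    (h : ∀ x : G, x ∉ Subgroup.center G →
      Nat.card (Subgroup.centralizer ({x} : Set G)) <
        3 + Nat.card (Subgroup.center G)) :
    Nonempty (G ≃* DihedralGroup 4) ∨ Nonempty (G ≃* QuaternionGroup 2) := by
  classical
  push_neg at hna
  obtain ⟨u, v, huv⟩ := hna
  have hu : u ∉ Subgroup.center G := by
    intro hmem
    exact huv ((Subgroup.mem_center_iff.mp hmem v).symm)
  -- centralizer cardinality is a proper multiple of the center's
  have key : ∀ x : G, x ∉ Subgroup.center G → ∃ m, 2 ≤ m ∧
      Nat.card (Subgroup.centralizer ({x} : Set G)) =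
        Nat.card (Subgroup.center G) * m := by
    intro x hx
    set C := Subgroup.centralizer ({x} : Set G) with hC
    have hle : Subgroup.center G ≤ C := Subgroup.center_le_centralizer {x}
    have hxC : x ∈ C := Subgroup.mem_centralizer_iff.mpr (by
      rintro g hg
      rw [Set.mem_singleton_iff] at hg
      rw [hg])
    have hcongr : Nat.card ((Subgroup.center G).subgroupOf C) =
        Nat.card (Subgroup.center G) :=
      Nat.card_congr (Subgroup.subgroupOfEquivOfLe hle).toEquiv
    have hdvd : Nat.card (Subgroup.center G) ∣ Nat.card C := by
      rw [← hcongr]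
      exact Subgroup.card_subgroup_dvd_card _
    obtain ⟨m, hm⟩ := hdvd
    refine ⟨m, ?_, hm⟩
    by_contra hlt
    push_neg at hlt
    interval_cases m
    · have : 0 < Nat.card C := Nat.card_pos
      omega
    · rw [mul_one] at hm
      have : Subgroup.center G = C :=
        Subgroup.eq_of_le_of_card_ge hle (le_of_eq hm)
      exact hx (this ▸ hxC)
  have hZ2 : Nat.card (Subgroup.center G) = 2 := by
    obtain ⟨m, hm2, hm⟩ := key u hu
    have := h u hu
    rw [hm] at this
    nlinarith
  have hC4 : ∀ x : G, x ∉ Subgroup.center G →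
      Nat.card (Subgroup.centralizer ({x} : Set G)) = 4 := by
    intro x hx
    obtain ⟨m, hm2, hm⟩ := key x hx
    have := h x hx
    rw [hm, hZ2] at this ⊢
    omega
  -- every square is central
  have hsq : ∀ g : G, g ^ 2 ∈ Subgroup.center G := by
    intro g
    by_cases hg : g ∈ Subgroup.center G
    · exact Subgroup.pow_mem _ hg 2
    · set C := Subgroup.centralizer ({g} : Set G) with hC
      have hle : Subgroup.center G ≤ C := Subgroup.center_le_centralizer {g}
      have hgC : g ∈ C := Subgroup.mem_centralizer_iff.mpr (by
        rintro w hw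
        rw [Set.mem_singleton_iff] at hw
        rw [hw])
      set Z' := (Subgroup.center G).subgroupOf C with hZ'def
      have hZ'card : Nat.card Z' = 2 := by
        rw [hZ'def]
        rw [Nat.card_congr (Subgroup.subgroupOfEquivOfLe hle).toEquiv, hZ2]
      have hnormal : Z'.Normal := by
        constructor
        intro n hn c
        have hnZ : (n : G) ∈ Subgroup.center G := Subgroup.mem_subgroupOf.mp hn
        rw [Subgroup.mem_subgroupOf]
        push_cast
        have hcomm := Subgroup.mem_center_iff.mp hnZ (c : G)
        rw [hcomm, mul_assoc, mul_inv_cancel, mul_one]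
        exact hnZ
      have hidx : Z'.index = 2 := by
        have hh := Subgroup.index_mul_card Z'
        rw [hZ'card, hC4 g hg] at hh
        omega
      have hmem := Z'.pow_index_mem ⟨g, hgC⟩
      rw [hidx] at hmem
      have := Subgroup.mem_subgroupOf.mp hmem
      simpa using this
  -- commutators are central
  have hcomm : ∀ a b : G, a * b * a⁻¹ * b⁻¹ ∈ Subgroup.center G := by
    intro a b
    have h2 := hsq a
    have h3 := hsq b
    have hcab : b * (a ^ 2)⁻¹ = (a ^ 2)⁻¹ * b :=
      Subgroup.mem_center_iff.mp ((Subgroup.center G).inv_mem h2) b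
    have hkey : a * b * a⁻¹ * b⁻¹ = (a * b) ^ 2 * (a ^ 2)⁻¹ * (b ^ 2)⁻¹ := by
      calc a * b * a⁻¹ * b⁻¹ = a * b * a * ((a ^ 2)⁻¹ * b) * (b ^ 2)⁻¹ := by group
        _ = a * b * a * (b * (a ^ 2)⁻¹) * (b ^ 2)⁻¹ := by rw [hcab]
        _ = (a * b) ^ 2 * (a ^ 2)⁻¹ * (b ^ 2)⁻¹ := by simp only [pow_two]; group
    rw [hkey]
    exact Subgroup.mul_mem _ (Subgroup.mul_mem _ (hsq (a * b))
      ((Subgroup.center G).inv_mem h2)) ((Subgroup.center G).inv_mem h3)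
  -- the order of G is 8
  have hcard8 : Nat.card G = 8 := by
    set C := Subgroup.centralizer ({u} : Set G) with hCdef
    have hle : Subgroup.center G ≤ C := Subgroup.center_le_centralizer {u}
    let φ : G → (Subgroup.center G) := fun g =>
      ⟨u⁻¹ * (g * u * g⁻¹), by
        have := hcomm u⁻¹ g
        simpa [mul_assoc] using this⟩
    have hsound : ∀ g k : G, QuotientGroup.leftRel C g k → φ g = φ k := by
      intro g k hgk
      rw [QuotientGroup.leftRel_apply] at hgk
      have hc : u * (g⁻¹ * k) = (g⁻¹ * k) * u := Subgroup.mem_centralizer_iff.mp hgk u rfl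
      have : g * u * g⁻¹ = k * u * k⁻¹ := by
        calc g * u * g⁻¹ = g * (u * (g⁻¹ * k)) * k⁻¹ := by group
          _ = g * ((g⁻¹ * k) * u) * k⁻¹ := by rw [hc]
          _ = k * u * k⁻¹ := by group
      simp only [φ, this]
    let ψ : G ⧸ C → (Subgroup.center G) := fun q => Quotient.liftOn' q φ hsound
    have hinj : Function.Injective ψ := by
      intro q1 q2 hq
      induction q1 using Quotient.inductionOn'
      induction q2 using Quotient.inductionOn'
      rename_i g k
      have hval : u⁻¹ * (g * u * g⁻¹) = u⁻¹ * (k * u * k⁻¹) := congrArg Subtype.val hq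
      have hval2 : g * u * g⁻¹ = k * u * k⁻¹ := by
        have := congrArg (fun w => u * w) hval
        simpa [mul_assoc] using this
      apply Quotient.sound'
      rw [QuotientGroup.leftRel_apply]
      apply Subgroup.mem_centralizer_iff.mpr
      intro s hs
      rw [Set.mem_singleton_iff] at hs
      rw [hs]
      calc u * (g⁻¹ * k) = g⁻¹ * (g * u * g⁻¹) * k := by group
        _ = g⁻¹ * (k * u * k⁻¹) * k := by rw [hval2]
        _ = (g⁻¹ * k) * u := by group
    have hidxle : C.index ≤ 2 := by
      have hle2 : Nat.card (G ⧸ C) ≤ Nat.card (Subgroup.center G) :=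
        Nat.card_le_card_of_injective ψ hinj
      rw [hZ2] at hle2
      exact hle2
    have hidxne1 : C.index ≠ 1 := by
      intro h1
      have htop : C = ⊤ := Subgroup.index_eq_one.mp h1
      apply hu
      apply Subgroup.mem_center_iff.mpr
      intro g
      have hgC : g ∈ C := htop ▸ Subgroup.mem_top g
      exact (Subgroup.mem_centralizer_iff.mp hgC u rfl).symm
    have hidxne0 : C.index ≠ 0 := Subgroup.index_ne_zero_of_finite
    have hidx2 : C.index = 2 := by omega
    have := Subgroup.index_mul_card C
    rw [hidx2, hC4 u hu] at this
    omega
  have hfcard : Fintype.card G = 8 := by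
    rw [← Nat.card_eq_fintype_card, hcard8]
  -- there is an element whose square is nontrivial
  have hexy : ∃ y : G, y ^ 2 ≠ 1 := by
    by_contra hall
    push_neg at hall
    have hiv : ∀ g : G, g⁻¹ = g := by
      intro g
      have := hall g
      rw [pow_two] at this
      exact inv_eq_of_mul_eq_one_left this
    apply huv
    have h1 : (u * v)⁻¹ = u * v := hiv _
    rw [mul_inv_rev, hiv, hiv] at h1
    exact h1.symm
  obtain ⟨y, hy2⟩ := hexy
  have hzZ : y ^ 2 ∈ Subgroup.center G := hsq y
  -- the unique nontrivial central element
  have huniq : ∃! w : (Subgroup.center G), w ≠ 1 :=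
    (Nat.card_eq_two_iff' (1 : (Subgroup.center G))).mp hZ2
  have hcentral_eq : ∀ w1 w2 : G, ∀ (h1 : w1 ∈ Subgroup.center G)
      (h2 : w2 ∈ Subgroup.center G), w1 ≠ 1 → w2 ≠ 1 → w1 = w2 := by
    intro w1 w2 h1 h2 hn1 hn2
    obtain ⟨w, -, hwuniq⟩ := huniq
    have e1 : (⟨w1, h1⟩ : (Subgroup.center G)) = w :=
      hwuniq _ (fun hc => hn1 (congrArg Subtype.val hc))
    have e2 : (⟨w2, h2⟩ : (Subgroup.center G)) = w :=
      hwuniq _ (fun hc => hn2 (congrArg Subtype.val hc))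
    have := e1.trans e2.symm
    exact congrArg Subtype.val this
  -- z has order 2, y has order 4
  have hz2 : (y ^ 2) ^ 2 = 1 := by
    have hp : (⟨y ^ 2, hzZ⟩ : (Subgroup.center G)) ^
        Nat.card (Subgroup.center G) = 1 := pow_card_eq_one'
    rw [hZ2] at hp
    have := congrArg Subtype.val hp
    simpa using this
  have hy4 : y ^ 4 = 1 := by
    rw [show (4 : ℕ) = 2 * 2 from rfl, pow_mul]
    exact hz2
  have horder : orderOf y = 4 := by
    have hdvd : orderOf y ∣ 4 := orderOf_dvd_of_pow_eq_one hy4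
    have hne2 : ¬ orderOf y ∣ 2 := fun hd => hy2 (orderOf_dvd_iff_pow_eq_one.mp hd)
    have hle4 : orderOf y ≤ 4 := Nat.le_of_dvd (by norm_num) hdvd
    interval_cases ho : orderOf y <;> revert hdvd hne2 <;> decide
  have hzpcard : Nat.card (Subgroup.zpowers y) = 4 := by
    rw [Nat.card_zpowers, horder]
  have hyZ : y ∉ Subgroup.center G := by
    intro hmem
    have hle : Subgroup.zpowers y ≤ Subgroup.center G := Subgroup.zpowers_le.mpr hmem
    have := Subgroup.card_le_of_le hle
    rw [hzpcard, hZ2] at this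
    omega
  have hcyZ : Subgroup.centralizer ({y} : Set G) = Subgroup.zpowers y := by
    have hle : Subgroup.zpowers y ≤ Subgroup.centralizer ({y} : Set G) := by
      intro w hw
      obtain ⟨k, rfl⟩ := hw
      apply Subgroup.mem_centralizer_iff.mpr
      intro s hs
      rw [Set.mem_singleton_iff] at hs
      rw [hs]
      exact ((Commute.refl y).zpow_right k)
    have hge : Nat.card (Subgroup.centralizer ({y} : Set G)) ≤
        Nat.card (Subgroup.zpowers y) := by
      rw [hzpcard, hC4 y hyZ]
    exact (Subgroup.eq_of_le_of_card_ge hle hge).symm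
  have hex : ∃ x : G, x ∉ Subgroup.zpowers y := by
    by_contra hall
    push_neg at hall
    have htop : Subgroup.zpowers y = ⊤ :=
      (Subgroup.eq_top_iff' (Subgroup.zpowers y)).mpr hall
    have := congrArg (fun H : Subgroup G => Nat.card H) htop
    simp only [Subgroup.card_top] at this
    rw [hzpcard, hcard8] at this
    omega
  obtain ⟨x, hx⟩ := hex
  -- x y x⁻¹ = y⁻¹
  have hcommxy : x * y * x⁻¹ * y⁻¹ ∈ Subgroup.center G := hcomm x y
  have hcommxy_ne : x * y * x⁻¹ * y⁻¹ ≠ 1 := by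
    intro heq
    apply hx
    rw [← hcyZ]
    apply Subgroup.mem_centralizer_iff.mpr
    intro s hs
    rw [Set.mem_singleton_iff] at hs
    rw [hs]
    have hc1 : x * y * x⁻¹ = y := mul_inv_eq_one.mp heq
    have hc2 : x * y = y * x := by
      calc x * y = (x * y * x⁻¹) * x := by group
        _ = y * x := by rw [hc1]
    exact hc2.symm
  -- identify the commutator with y ^ 2
  have heqz : x * y * x⁻¹ * y⁻¹ = y ^ 2 :=
    hcentral_eq _ _ hcommxy hzZ hcommxy_ne hy2
  have hxyx : x * y * x⁻¹ = y⁻¹ := by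
    have h1 : x * y * x⁻¹ = y ^ 2 * y := by
      calc x * y * x⁻¹ = (x * y * x⁻¹ * y⁻¹) * y := by group
        _ = y ^ 2 * y := by rw [heqz]
    rw [h1]
    rw [eq_inv_iff_mul_eq_one]
    calc y ^ 2 * y * y = y ^ 4 := by group
      _ = 1 := hy4
  -- x² is central, hence 1 or y²
  have hx2Z : x ^ 2 ∈ Subgroup.center G := hsq x
  by_cases hx2 : x ^ 2 = 1
  · exact Or.inl (dihedral_aux hfcard horder hxyx hx2 hx)
  · have hx2y2 : x ^ 2 = y ^ 2 := hcentral_eq _ _ hx2Z hzZ hx2 hy2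
    exact Or.inr (quaternion_aux hfcard horder hxyx hx2y2 hx)
end

section
/- Let G be a finite non-abelian group with nontrivial center (|Z(G)| ≥ 2) such that |C_G(x)| < 4 + |Z(G)| for every noncentral element x (i.e., G is strong claw-free). Then for every noncentral x in G, |C_G(x)| = 4 or |C_G(x)| = 6. -/
/-- If a finite non-abelian group `G` has nontrivial center and is strong claw-free
(i.e. `|C_G(x)| < 4 + |Z(G)|` for every noncentral `x`), then every noncentral element
has centralizer of order `4` or `6`. -/
theorem centralizer_four_or_six_of_strong_claw_free (G : Type*) [Group G] [Fintype G]
    (hna : ¬ ∀ a b : G, a * b = b * a)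
    (hZ : 2 ≤ Nat.card (Subgroup.center G))
    (h : ∀ x : G, x ∉ Subgroup.center G →
      Nat.card (Subgroup.centralizer ({x} : Set G)) <
        4 + Nat.card (Subgroup.center G)) :
    ∀ x : G, x ∉ Subgroup.center G →
      Nat.card (Subgroup.centralizer ({x} : Set G)) = 4 ∨
      Nat.card (Subgroup.centralizer ({x} : Set G)) = 6 := by
  have key : ∀ x : G, x ∉ Subgroup.center G →
      Nat.card (Subgroup.center G) ∣ Nat.card (Subgroup.centralizer ({x} : Set G)) ∧
      Nat.card (Subgroup.center G) < Nat.card (Subgroup.centralizer ({x} : Set G)) := by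
    intro x hx
    have hle := Subgroup.center_le_centralizer ({x} : Set G)
    have hdvd : Nat.card (Subgroup.center G) ∣
        Nat.card (Subgroup.centralizer ({x} : Set G)) := Subgroup.card_dvd_of_le hle
    refine ⟨hdvd, ?_⟩
    by_contra hlt
    push_neg at hlt
    have heq : Subgroup.center G = Subgroup.centralizer ({x} : Set G) :=
      Subgroup.eq_of_le_of_card_ge hle hlt
    exact hx (heq ▸ Subgroup.mem_centralizer_singleton_iff.mpr rfl)
  -- get a noncentral element
  push_neg at hna
  obtain ⟨a, b, hab⟩ := hna
  have ha : a ∉ Subgroup.center G := fun hc => hab ((Subgroup.mem_center_iff.mp hc b).symm)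
  -- bound the center
  have hZ3 : Nat.card (Subgroup.center G) ≤ 3 := by
    obtain ⟨hdvd, hlt⟩ := key a ha
    have hb := h a ha
    obtain ⟨k, hk⟩ := hdvd
    have hZpos : 0 < Nat.card (Subgroup.center G) := by omega
    rcases Nat.lt_or_ge k 2 with hk2 | hk2
    · interval_cases k <;> omega
    · nlinarith
  intro x hx
  obtain ⟨hdvd, hlt⟩ := key x hx
  have hb := h x hx
  obtain ⟨k, hk⟩ := hdvd
  interval_cases (Nat.card (Subgroup.center G)) <;> omega
end

section
/- Let G be a finite non-abelian group with |Z(G)| = 2 such that |C_G(x)| < 4 + |Z(G)| for every noncentral element x (i.e., G is strong claw-free). Then G is isomorphic to Q_8 or to D_8. -/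
private lemma zpow_eq_of_cast_eq' {G : Type*} [Group G] {a : G} (ha : a ^ (4:ℕ) = 1)
    {m k : ℤ} (h : (m : ZMod 4) = (k : ZMod 4)) : a ^ m = a ^ k := by
  have hd : (4:ℤ) ∣ m - k := ((ZMod.intCast_eq_intCast_iff m k 4).mp h).symm.dvd
  obtain ⟨t, ht⟩ := hd
  have hm : m = k + 4 * t := by linarith
  have h4 : a ^ (4:ℤ) = 1 := by
    rw [show (4:ℤ) = ((4:ℕ):ℤ) by norm_num, zpow_natCast, ha]
  calc a ^ m = a ^ k * (a ^ (4:ℤ)) ^ t := by rw [← zpow_mul, ← zpow_add, hm]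
  _ = a ^ k := by rw [h4, one_zpow, mul_one]

private lemma dvd_four_cases {o : ℕ} (h : o ∣ 4) : o = 1 ∨ o = 2 ∨ o = 4 := by
  have hm : o ∈ Nat.divisors 4 := Nat.mem_divisors.mpr ⟨h, by norm_num⟩
  have h4 : Nat.divisors 4 = {1, 2, 4} := by decide
  rw [h4] at hm
  simpa using hm

private lemma equiv_D8 {G : Type*} [Group G] [Fintype G] {a b : G}
    (horder : orderOf a = 4) (hcard : Nat.card G = 8)
    (hb : b ∉ Subgroup.zpowers a) (hconj : b⁻¹ * a * b = a⁻¹)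
    (hbb : b * b = 1) : Nonempty (G ≃* DihedralGroup 4) := by
  have ha4 : a ^ (4:ℕ) = 1 := by rw [← horder]; exact pow_orderOf_eq_one a
  have key : ∀ {m k : ℤ}, ((m : ZMod 4) = (k : ZMod 4)) → a ^ m = a ^ k :=
    fun h => zpow_eq_of_cast_eq' ha4 h
  have hcm : ∀ m : ℤ, a ^ m * b = b * a ^ (-m) := by
    intro m
    have hc : a = b * a⁻¹ * b⁻¹ := by rw [← hconj]; group
    have h2 : a ^ m = b * a ^ (-m) * b⁻¹ := by
      conv_lhs => rw [hc]
      rw [conj_zpow, inv_zpow, ← zpow_neg]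
    rw [h2]; group
  let f : DihedralGroup 4 → G := fun x => match x with
    | .r i => a ^ (i.val : ℤ)
    | .sr i => b * a ^ (i.val : ℤ)
  have hmul : ∀ x y, f (x * y) = f x * f y := by
    rintro (i | i) (j | j)
    · show a ^ (((i+j).val : ℤ)) = a ^ ((i.val : ℤ)) * a ^ ((j.val : ℤ))
      rw [← zpow_add]
      exact key (by push_cast [ZMod.natCast_val, ZMod.cast_id]; ring)
    · show b * a ^ (((j-i).val : ℤ)) = a ^ ((i.val : ℤ)) * (b * a ^ ((j.val : ℤ)))
      rw [← mul_assoc, hcm, mul_assoc, ← zpow_add]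
      congr 1
      exact key (by push_cast [ZMod.natCast_val, ZMod.cast_id]; ring)
    · show b * a ^ (((i+j).val : ℤ)) = (b * a ^ ((i.val : ℤ))) * a ^ ((j.val : ℤ))
      rw [mul_assoc, ← zpow_add]
      congr 1
      exact key (by push_cast [ZMod.natCast_val, ZMod.cast_id]; ring)
    · show a ^ (((j-i).val : ℤ)) = (b * a ^ ((i.val : ℤ))) * (b * a ^ ((j.val : ℤ)))
      rw [show (b * a ^ ((i.val:ℤ))) * (b * a ^ ((j.val:ℤ)))
            = b * (a ^ ((i.val:ℤ)) * b) * a ^ ((j.val:ℤ)) by group,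
         hcm,
         show b * (b * a ^ (-(i.val:ℤ))) * a ^ ((j.val:ℤ))
            = (b * b) * a ^ (-(i.val:ℤ) + (j.val:ℤ)) by rw [zpow_add]; group,
         hbb, one_mul]
      exact key (by push_cast [ZMod.natCast_val, ZMod.cast_id]; ring)
  let F : DihedralGroup 4 →* G := MonoidHom.mk' f hmul
  have hinj : Function.Injective F := by
    rw [injective_iff_map_eq_one]
    rintro (i | i) hx
    · have h1 : a ^ (i.val) = 1 := by
        have := hx; rwa [show F (.r i) = a ^ ((i.val:ℤ)) from rfl, zpow_natCast] at this
      have h4 : (4:ℕ) ∣ i.val := by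
        have := orderOf_dvd_of_pow_eq_one h1; rwa [horder] at this
      have hlt : i.val < 4 := ZMod.val_lt i
      have : i.val = 0 := by omega
      have : i = 0 := by rwa [← ZMod.val_eq_zero]
      rw [this]; rfl
    · exfalso
      have hx' : b * a ^ ((i.val:ℤ)) = 1 := hx
      have : a ^ (-(i.val:ℤ)) = b := by
        rw [zpow_neg, ← eq_inv_of_mul_eq_one_left hx']
      exact hb (Subgroup.mem_zpowers_iff.mpr ⟨_, this⟩)
  have hbij : Function.Bijective F := by
    rw [Nat.bijective_iff_injective_and_card]
    refine ⟨hinj, ?_⟩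
    rw [Nat.card_eq_fintype_card, DihedralGroup.card, hcard]
  exact ⟨(MulEquiv.ofBijective F hbij).symm⟩

private lemma equiv_Q8 {G : Type*} [Group G] [Fintype G] {a b : G}
    (horder : orderOf a = 4) (hcard : Nat.card G = 8)
    (hb : b ∉ Subgroup.zpowers a) (hconj : b⁻¹ * a * b = a⁻¹)
    (hbb : b * b = a * a) : Nonempty (G ≃* QuaternionGroup 2) := by
  have ha4 : a ^ (4:ℕ) = 1 := by rw [← horder]; exact pow_orderOf_eq_one a
  have key : ∀ {m k : ℤ}, ((m : ZMod 4) = (k : ZMod 4)) → a ^ m = a ^ k :=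
    fun h => zpow_eq_of_cast_eq' ha4 h
  have hcm : ∀ m : ℤ, a ^ m * b = b * a ^ (-m) := by
    intro m
    have hc : a = b * a⁻¹ * b⁻¹ := by rw [← hconj]; group
    have h2 : a ^ m = b * a ^ (-m) * b⁻¹ := by
      conv_lhs => rw [hc]
      rw [conj_zpow, inv_zpow, ← zpow_neg]
    rw [h2]; group
  let f : QuaternionGroup 2 → G := fun x => match x with
    | .a i => a ^ (i.val : ℤ)
    | .xa i => b * a ^ (i.val : ℤ)
  have hmul : ∀ x y, f (x * y) = f x * f y := by
    rintro (i | i) (j | j)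
    · show a ^ (((i+j).val : ℤ)) = a ^ ((i.val : ℤ)) * a ^ ((j.val : ℤ))
      rw [← zpow_add]
      exact key (by push_cast [ZMod.natCast_val, ZMod.cast_id]; ring)
    · show b * a ^ (((j-i).val : ℤ)) = a ^ ((i.val : ℤ)) * (b * a ^ ((j.val : ℤ)))
      rw [← mul_assoc, hcm, mul_assoc, ← zpow_add]
      congr 1
      exact key (by push_cast [ZMod.natCast_val, ZMod.cast_id]; ring)
    · show b * a ^ (((i+j).val : ℤ)) = (b * a ^ ((i.val : ℤ))) * a ^ ((j.val : ℤ))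
      rw [mul_assoc, ← zpow_add]
      congr 1
      exact key (by push_cast [ZMod.natCast_val, ZMod.cast_id]; ring)
    · show a ^ (((((2:ℕ) : ZMod (2*2)) + j - i).val : ℤ))
          = (b * a ^ ((i.val : ℤ))) * (b * a ^ ((j.val : ℤ)))
      rw [show (b * a ^ ((i.val:ℤ))) * (b * a ^ ((j.val:ℤ)))
            = b * (a ^ ((i.val:ℤ)) * b) * a ^ ((j.val:ℤ)) by group,
         hcm,
         show b * (b * a ^ (-(i.val:ℤ))) * a ^ ((j.val:ℤ))
            = (b * b) * a ^ (-(i.val:ℤ) + (j.val:ℤ)) by rw [zpow_add]; group,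
         hbb,
         show (a * a) * a ^ (-(i.val:ℤ) + (j.val:ℤ))
            = a ^ ((2:ℤ) + (-(i.val:ℤ) + (j.val:ℤ))) by rw [zpow_add]; group]
      exact key (by push_cast [ZMod.natCast_val, ZMod.cast_id]; ring)
  let F : QuaternionGroup 2 →* G := MonoidHom.mk' f hmul
  have hinj : Function.Injective F := by
    rw [injective_iff_map_eq_one]
    rintro (i | i) hx
    · have h1 : a ^ (i.val) = 1 := by
        have := hx; rwa [show F (.a i) = a ^ ((i.val:ℤ)) from rfl, zpow_natCast] at this
      have h4 : (4:ℕ) ∣ i.val := by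
        have := orderOf_dvd_of_pow_eq_one h1; rwa [horder] at this
      have hlt : i.val < 4 := ZMod.val_lt i
      have : i.val = 0 := by omega
      have : i = 0 := by rwa [← ZMod.val_eq_zero]
      rw [this]; rfl
    · exfalso
      have hx' : b * a ^ ((i.val:ℤ)) = 1 := hx
      have : a ^ (-(i.val:ℤ)) = b := by
        rw [zpow_neg, ← eq_inv_of_mul_eq_one_left hx']
      exact hb (Subgroup.mem_zpowers_iff.mpr ⟨_, this⟩)
  have hbij : Function.Bijective F := by
    rw [Nat.bijective_iff_injective_and_card]
    refine ⟨hinj, ?_⟩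
    rw [Nat.card_eq_fintype_card, QuaternionGroup.card, hcard]
  exact ⟨(MulEquiv.ofBijective F hbij).symm⟩

/-- A finite non-abelian group with center of order `2` that is strong claw-free
(i.e. `|C_G(x)| < 4 + |Z(G)|` for every noncentral `x`) is isomorphic to `Q₈` or `D₈`. -/
theorem iso_Q8_or_D8_of_strong_claw_free (G : Type*) [Group G] [Fintype G]
    (hna : ¬ ∀ a b : G, a * b = b * a)
    (hZ : Nat.card (Subgroup.center G) = 2)
    (h : ∀ x : G, x ∉ Subgroup.center G →
      Nat.card (Subgroup.centralizer ({x} : Set G)) <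
        4 + Nat.card (Subgroup.center G)) :
    Nonempty (G ≃* QuaternionGroup 2) ∨ Nonempty (G ≃* DihedralGroup 4) := by
  classical
  -- Step 1: every noncentral element has centralizer of order 4
  have hC4 : ∀ x : G, x ∉ Subgroup.center G →
      Nat.card (Subgroup.centralizer ({x} : Set G)) = 4 := by
    intro x hx
    have hle : Subgroup.center G ≤ Subgroup.centralizer ({x} : Set G) :=
      Subgroup.center_le_centralizer {x}
    have hdvd : (2:ℕ) ∣ Nat.card (Subgroup.centralizer ({x} : Set G)) := by
      have := Subgroup.card_dvd_of_le hle; rwa [hZ] at this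
    have hlt : Nat.card (Subgroup.centralizer ({x} : Set G)) < 6 := by
      have := h x hx; omega
    have hpos : 0 < Nat.card (Subgroup.centralizer ({x} : Set G)) := Nat.card_pos
    have h24 : Nat.card (Subgroup.centralizer ({x} : Set G)) = 2 ∨
        Nat.card (Subgroup.centralizer ({x} : Set G)) = 4 := by omega
    rcases h24 with h2 | h4
    · exfalso
      have heq : Subgroup.center G = Subgroup.centralizer ({x} : Set G) :=
        Subgroup.eq_of_le_of_card_ge hle (by rw [h2, hZ])
      have hxc : x ∈ Subgroup.centralizer ({x} : Set G) :=
        Subgroup.mem_centralizer_singleton_iff.mpr rfl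
      rw [← heq] at hxc
      exact hx hxc
    · exact h4
  -- Step 2: the nontrivial central element z
  have hnt : Nontrivial (Subgroup.center G) := by
    rw [← Finite.one_lt_card_iff_nontrivial, hZ]; norm_num
  obtain ⟨ζ, hζ⟩ := exists_ne (1 : Subgroup.center G)
  have hζ2 : ζ * ζ = 1 := by
    have hd : orderOf ζ ∣ 2 := by
      have := orderOf_dvd_natCard ζ; rwa [hZ] at this
    have := orderOf_dvd_iff_pow_eq_one.mp hd
    rwa [pow_two] at this
  have hζord : orderOf ζ = 2 := by
    have hd : orderOf ζ ∣ 2 := orderOf_dvd_of_pow_eq_one (by rwa [pow_two])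
    rcases (Nat.dvd_prime Nat.prime_two).mp hd with h1 | h2
    · exact absurd (orderOf_eq_one_iff.mp h1) hζ
    · exact h2
  have hztop : Subgroup.zpowers ζ = ⊤ :=
    Subgroup.eq_top_of_card_eq _ (by rw [Nat.card_zpowers, hζord, hZ])
  set z : G := (ζ : G) with hzdef
  have hz_mem : z ∈ Subgroup.center G := ζ.2
  have hz_ne : z ≠ 1 := fun hh => hζ (by ext; exact hh)
  have hz2 : z * z = 1 := by
    have := congrArg (Subtype.val) hζ2
    simpa using this
  have hzmem : ∀ w ∈ Subgroup.center G, w = 1 ∨ w = z := by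
    intro w hw
    have hmem : (⟨w, hw⟩ : Subgroup.center G) ∈ Subgroup.zpowers ζ := by
      rw [hztop]; trivial
    obtain ⟨k, hk⟩ := Subgroup.mem_zpowers_iff.mp hmem
    have hζz2 : ζ ^ (2:ℤ) = 1 := by
      rw [show (2:ℤ) = ((2:ℕ):ℤ) by norm_num, zpow_natCast, pow_two, hζ2]
    have hk2 : ζ ^ (k % 2) = ⟨w, hw⟩ := by
      rw [← hk]
      conv_rhs => rw [← Int.emod_add_mul_ediv k 2]
      rw [zpow_add, zpow_mul, hζz2, one_zpow, mul_one]
    rcases Int.emod_two_eq_zero_or_one k with hp | hp <;> rw [hp] at hk2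
    · left
      have := congrArg (Subtype.val) hk2
      simpa using this.symm
    · right
      have := congrArg (Subtype.val) hk2
      simpa using this.symm
  -- Step 3: every square is central
  have hsq : ∀ g : G, g * g ∈ Subgroup.center G := by
    intro g
    by_cases hg : g ∈ Subgroup.center G
    · exact mul_mem hg hg
    · by_cases hgg : g * g = 1
      · rw [hgg]; exact one_mem _
      · have hdvd : orderOf g ∣ 4 := by
          have := Subgroup.orderOf_dvd_natCard (Subgroup.centralizer ({g} : Set G))
            (Subgroup.mem_centralizer_singleton_iff.mpr rfl)
          rwa [hC4 g hg] at this
        have ho4 : orderOf g = 4 := by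
          rcases dvd_four_cases hdvd with h1 | h1 | h1
          · exfalso
            have hg1 : g = 1 := orderOf_eq_one_iff.mp h1
            rw [hg1] at hg; exact hg (one_mem _)
          · exfalso
            have := pow_orderOf_eq_one g
            rw [h1, pow_two] at this
            exact hgg this
          · exact h1
        have hzp_le : Subgroup.zpowers g ≤ Subgroup.centralizer ({g} : Set G) :=
          Subgroup.zpowers_le.mpr (Subgroup.mem_centralizer_singleton_iff.mpr rfl)
        have heq : Subgroup.zpowers g = Subgroup.centralizer ({g} : Set G) :=
          Subgroup.eq_of_le_of_card_ge hzp_le (by rw [Nat.card_zpowers, ho4, hC4 g hg])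
        have hzin : z ∈ Subgroup.zpowers g := by
          rw [heq]; exact Subgroup.center_le_centralizer {g} hz_mem
        obtain ⟨k, hk⟩ := Subgroup.mem_zpowers_iff.mp hzin
        have hg4 : g ^ (4:ℤ) = 1 := by
          rw [show (4:ℤ) = ((4:ℕ):ℤ) by norm_num, zpow_natCast, ← ho4]
          exact pow_orderOf_eq_one g
        have hk2 : g ^ (k % 4) = z := by
          rw [← hk]
          conv_rhs => rw [← Int.emod_add_mul_ediv k 4]
          rw [zpow_add, zpow_mul, hg4, one_zpow, mul_one]
        have hcase : k % 4 = 0 ∨ k % 4 = 1 ∨ k % 4 = 2 ∨ k % 4 = 3 := by omega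
        rcases hcase with hp | hp | hp | hp <;> rw [hp] at hk2
        · exfalso; exact hz_ne (by rw [← hk2]; simp)
        · exfalso
          rw [zpow_one] at hk2
          rw [hk2] at hg; exact hg hz_mem
        · rw [show (2:ℤ) = ((2:ℕ):ℤ) by norm_num, zpow_natCast, pow_two] at hk2
          rw [hk2]; exact hz_mem
        · exfalso
          have hzg : z * g = 1 := by
            rw [← hk2, ← hg4, show (4:ℤ) = 3 + 1 by norm_num, zpow_add, zpow_one]
          have hgz : g = z⁻¹ := eq_inv_of_mul_eq_one_right hzg
          rw [hgz] at hg
          exact hg (inv_mem hz_mem)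
  -- Step 4: commutators are central
  have hcomm_center : ∀ x y : G, x⁻¹ * y⁻¹ * x * y ∈ Subgroup.center G := by
    intro x y
    have hid : x⁻¹ * y⁻¹ * x * y = (x * x)⁻¹ * ((x * y⁻¹) * (x * y⁻¹)) * (y * y) := by
      group
    rw [hid]
    exact mul_mem (mul_mem (inv_mem (hsq x)) (hsq (x * y⁻¹))) (hsq y)
  -- Step 5: the group has order 8
  obtain ⟨x, y, hxy⟩ : ∃ x y : G, x * y ≠ y * x := by
    push_neg at hna; exact hna
  have hxnc : x ∉ Subgroup.center G := by
    intro hx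
    exact hxy ((Subgroup.mem_center_iff.mp hx y).symm)
  have hmulφ : ∀ y₁ w : G, x⁻¹ * (y₁ * w)⁻¹ * x * (y₁ * w)
      = (x⁻¹ * y₁⁻¹ * x * y₁) * (x⁻¹ * w⁻¹ * x * w) := by
    intro y₁ w
    have hcy := Subgroup.mem_center_iff.mp (hcomm_center x y₁)
    rw [show x⁻¹ * (y₁ * w)⁻¹ * x * (y₁ * w)
        = x⁻¹ * w⁻¹ * x * ((x⁻¹ * y₁⁻¹ * x * y₁) * w) by group,
      ← hcy w,
      show x⁻¹ * w⁻¹ * x * (w * (x⁻¹ * y₁⁻¹ * x * y₁))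
        = (x⁻¹ * w⁻¹ * x * w) * (x⁻¹ * y₁⁻¹ * x * y₁) by group]
    exact hcy (x⁻¹ * w⁻¹ * x * w)
  set φ : G →* G := MonoidHom.mk' (fun y₁ => x⁻¹ * y₁⁻¹ * x * y₁) hmulφ with hφdef
  have hker : φ.ker = Subgroup.centralizer ({x} : Set G) := by
    ext w
    rw [MonoidHom.mem_ker, Subgroup.mem_centralizer_singleton_iff]
    show x⁻¹ * w⁻¹ * x * w = 1 ↔ w * x = x * w
    rw [show x⁻¹ * w⁻¹ * x * w = (w * x)⁻¹ * (x * w) by group, inv_mul_eq_one]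
  have hrange : φ.range ≤ Subgroup.center G := by
    rintro _ ⟨w, rfl⟩
    exact hcomm_center x w
  have hrange2 : Nat.card φ.range = 2 := by
    have hd : Nat.card φ.range ∣ 2 := by
      have := Subgroup.card_dvd_of_le hrange; rwa [hZ] at this
    rcases (Nat.dvd_prime Nat.prime_two).mp hd with h1 | h2
    · exfalso
      have hbot : φ.range = ⊥ := Subgroup.eq_bot_of_card_eq _ h1
      have : φ y = 1 := by
        rw [← Subgroup.mem_bot, ← hbot]; exact ⟨y, rfl⟩
      have h1' : x⁻¹ * y⁻¹ * x * y = 1 := this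
      rw [show x⁻¹ * y⁻¹ * x * y = (y * x)⁻¹ * (x * y) by group, inv_mul_eq_one] at h1'
      exact hxy h1'.symm
    · exact h2
  have hcard8 : Nat.card G = 8 := by
    have hce := Subgroup.card_eq_card_quotient_mul_card_subgroup φ.ker
    have hq : Nat.card (G ⧸ φ.ker) = Nat.card φ.range :=
      Nat.card_congr (QuotientGroup.quotientKerEquivRange φ).toEquiv
    rw [hq, hrange2, hker, hC4 x hxnc] at hce
    exact hce
  -- Step 6: an element a of order 4 with a * a = z
  obtain ⟨a, haa⟩ : ∃ a : G, a * a ≠ 1 := by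
    by_contra hall
    push_neg at hall
    apply hna
    intro u v
    have hu : u⁻¹ = u := by rw [← mul_eq_one_iff_inv_eq]; exact hall u
    have hv : v⁻¹ = v := by rw [← mul_eq_one_iff_inv_eq]; exact hall v
    have huv : (u * v)⁻¹ = u * v := by rw [← mul_eq_one_iff_inv_eq]; exact hall (u * v)
    calc u * v = (u * v)⁻¹ := huv.symm
    _ = v⁻¹ * u⁻¹ := by rw [mul_inv_rev]
    _ = v * u := by rw [hu, hv]
  have haz : a * a = z := by
    rcases hzmem (a * a) (hsq a) with h1 | h1
    · exact absurd h1 haa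
    · exact h1
  have hanc : a ∉ Subgroup.center G := by
    intro ha
    rcases hzmem a ha with h1 | h1
    · rw [h1] at haa; simp at haa
    · rw [h1] at haa; exact haa hz2
  have ha4 : a ^ (4:ℕ) = 1 := by
    have h44 : a ^ (4:ℕ) = (a * a) * (a * a) := by
      rw [show (4:ℕ) = 2 + 2 by norm_num, pow_add, pow_two]
    rw [h44, haz, hz2]
  have horder : orderOf a = 4 := by
    have hdvd : orderOf a ∣ 4 := orderOf_dvd_of_pow_eq_one ha4
    rcases dvd_four_cases hdvd with h1 | h1 | h1
    · exfalso
      have ha1 : a = 1 := orderOf_eq_one_iff.mp h1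
      rw [ha1] at haa; simp at haa
    · exfalso
      have := pow_orderOf_eq_one a
      rw [h1, pow_two] at this
      exact haa this
    · exact h1
  -- Step 7: an element b outside the centralizer of a
  obtain ⟨b, hbC⟩ : ∃ b : G, b ∉ Subgroup.centralizer ({a} : Set G) := by
    by_contra hall
    push_neg at hall
    have htop : Subgroup.centralizer ({a} : Set G) = ⊤ := by
      rw [Subgroup.eq_top_iff']; exact hall
    have := hC4 a hanc
    rw [htop, Subgroup.card_top, hcard8] at this
    omega
  have hbzp : b ∉ Subgroup.zpowers a := fun hmem =>
    hbC (Subgroup.zpowers_le.mpr (Subgroup.mem_centralizer_singleton_iff.mpr rfl) hmem)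
  have hcnc : a⁻¹ * b⁻¹ * a * b ∈ Subgroup.center G := hcomm_center a b
  have hcne : a⁻¹ * b⁻¹ * a * b ≠ 1 := by
    intro h1
    rw [show a⁻¹ * b⁻¹ * a * b = (b * a)⁻¹ * (a * b) by group, inv_mul_eq_one] at h1
    exact hbC (Subgroup.mem_centralizer_singleton_iff.mpr h1)
  have hcz : a⁻¹ * b⁻¹ * a * b = z := by
    rcases hzmem _ hcnc with h1 | h1
    · exact absurd h1 hcne
    · exact h1
  have hconj : b⁻¹ * a * b = a⁻¹ := by
    have h3 : b⁻¹ * a * b = a * (a * a) := by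
      calc b⁻¹ * a * b = a * (a⁻¹ * b⁻¹ * a * b) := by group
      _ = a * (a * a) := by rw [hcz, ← haz]
    have h4 : a * (a * a) = a⁻¹ := by
      have hh : (a * (a * a)) * a = 1 := by
        rw [show (a * (a * a)) * a = a ^ (4:ℕ) by
          rw [show (4:ℕ) = 2 + 2 by norm_num, pow_add, pow_two]; group, ha4]
      exact eq_inv_of_mul_eq_one_left hh
    rw [h3, h4]
  -- Step 8: conclude
  rcases hzmem (b * b) (hsq b) with hbb | hbb
  · right
    exact equiv_D8 horder hcard8 hbzp hconj hbb
  · left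
    have hbb' : b * b = a * a := by rw [hbb, haz]
    exact equiv_Q8 horder hcard8 hbzp hconj hbb'
end

section
/- Let n be an odd natural number with n ≥ 3 and let G = D_{2n} be the dihedral group of order 2n. Then for every natural number k, G is strong k-star free (i.e., |C_G(x)| < (k+1) + |Z(G)| for all noncentral x in G) if and only if k ≥ n - 1. Equivalently, the strong star number of D_{2n} is S(D_{2n}) = n - 1. -/
open DihedralGroup Subgroup

section aux

variable {n : ℕ}

lemma odd_cancel_two (hodd : Odd n) (hn : 3 ≤ n) {i : ZMod n} (h : i + i = 0) : i = 0 := by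
  haveI : NeZero n := ⟨by omega⟩
  have hu : IsUnit (2 : ZMod n) := by
    have : IsUnit ((2 : ℕ) : ZMod n) :=
      (ZMod.isUnit_iff_coprime 2 n).mpr (Nat.coprime_two_left.mpr hodd)
    exact_mod_cast this
  have h2 : (2 : ZMod n) * i = 0 := by linear_combination h
  exact (hu.mul_right_eq_zero).mp h2

lemma center_eq_bot (hodd : Odd n) (hn : 3 ≤ n) :
    Subgroup.center (DihedralGroup n) = ⊥ := by
  haveI : NeZero n := ⟨by omega⟩
  haveI : Fact (1 < n) := ⟨by omega⟩
  rw [Subgroup.eq_bot_iff_forall]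
  intro x hx
  rw [Subgroup.mem_center_iff] at hx
  cases x with
  | r i =>
    have h := hx (sr 0)
    simp only [sr_mul_r, r_mul_sr, zero_add, zero_sub] at h
    have h' : i = -i := by injection h
    have hi : i = 0 := odd_cancel_two hodd hn (by linear_combination h')
    rw [hi, ← one_def]
  | sr i =>
    have h := hx (r 1)
    simp only [r_mul_sr, sr_mul_r] at h
    have h' : i - 1 = i + 1 := by injection h
    have h2 : (1 : ZMod n) + 1 = 0 := by linear_combination -h'
    exact absurd (odd_cancel_two hodd hn h2) one_ne_zero

lemma centralizer_r (hodd : Odd n) (hn : 3 ≤ n) {i : ZMod n} (hi : i ≠ 0) :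
    Subgroup.centralizer ({r i} : Set (DihedralGroup n)) =
      Subgroup.zpowers (r 1) := by
  haveI : NeZero n := ⟨by omega⟩
  ext x
  rw [Subgroup.mem_centralizer_singleton_iff]
  constructor
  · intro h
    cases x with
    | r j =>
      obtain ⟨k, rfl⟩ := ZMod.natCast_rightInverse.surjective j
      exact ⟨(k : ℤ), by
        show (r 1 : DihedralGroup n) ^ (k : ℤ) = r (k : ZMod n)
        rw [zpow_natCast, r_one_pow]⟩
    | sr j =>
      simp only [sr_mul_r, r_mul_sr] at h
      have h' : j + i = j - i := by injection h
      exact absurd (odd_cancel_two hodd hn (by linear_combination h')) hi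
  · rintro ⟨m, rfl⟩
    show (r 1 : DihedralGroup n) ^ m * r i = r i * (r 1 : DihedralGroup n) ^ m
    have hcomm : ∀ j : ZMod n, r j * r i = r i * r j := by
      intro j; simp [r_mul_r, add_comm]
    obtain ⟨j, hj⟩ : ∃ j : ZMod n, (r 1 : DihedralGroup n) ^ m = r j := by
      induction m using Int.induction_on with
      | zero => exact ⟨0, by rw [zpow_zero, one_def]⟩
      | succ k ih => obtain ⟨j, hj⟩ := ih; exact ⟨j + 1, by rw [zpow_add_one, hj, r_mul_r]⟩
      | pred k ih =>
        obtain ⟨j, hj⟩ := ih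
        refine ⟨j - 1, ?_⟩
        rw [zpow_sub_one, hj]
        have hinv : (r 1 : DihedralGroup n)⁻¹ = r (-1) := by
          rw [inv_eq_iff_mul_eq_one, r_mul_r, one_def]; norm_num
        rw [hinv, r_mul_r]; ring_nf
    rw [hj]; exact hcomm j

lemma centralizer_sr (hodd : Odd n) (hn : 3 ≤ n) (i : ZMod n) :
    Subgroup.centralizer ({sr i} : Set (DihedralGroup n)) =
      Subgroup.zpowers (sr i) := by
  haveI : NeZero n := ⟨by omega⟩
  ext x
  rw [Subgroup.mem_centralizer_singleton_iff]
  constructor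
  · intro h
    cases x with
    | r j =>
      simp only [r_mul_sr, sr_mul_r] at h
      have h' : i - j = i + j := by injection h
      have hj : j = 0 := odd_cancel_two hodd hn (by linear_combination -h')
      exact ⟨0, by
        show (sr i : DihedralGroup n) ^ (0 : ℤ) = r j
        rw [zpow_zero, hj, one_def]⟩
    | sr j =>
      simp only [sr_mul_sr] at h
      have h' : i - j = j - i := by injection h
      have hj : j = i := by
        have := odd_cancel_two hodd hn (i := j - i) (by linear_combination -h')
        linear_combination this
      exact ⟨1, by
        show (sr i : DihedralGroup n) ^ (1 : ℤ) = sr j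
        rw [zpow_one, hj]⟩
  · rintro ⟨m, rfl⟩
    show (sr i : DihedralGroup n) ^ m * sr i = sr i * (sr i : DihedralGroup n) ^ m
    exact ((Commute.refl (sr i)).zpow_left m).eq

end aux

/-- For odd `n ≥ 3`, the dihedral group `D_{2n}` is strong `k`-star free
(i.e. `|C_G(x)| < (k+1) + |Z(G)|` for all noncentral `x`) iff `k ≥ n - 1`;
equivalently, its strong star number is `n - 1`. -/
theorem dihedral_odd_strong_star_free (n : ℕ) (hn : 3 ≤ n) (hodd : Odd n) :
    (∀ k : ℕ,
      (∀ x : DihedralGroup n, x ∉ Subgroup.center (DihedralGroup n) →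
        Nat.card (Subgroup.centralizer ({x} : Set (DihedralGroup n))) <
          (k + 1) + Nat.card (Subgroup.center (DihedralGroup n))) ↔ n - 1 ≤ k) ∧
    sInf {k : ℕ | ∀ x : DihedralGroup n, x ∉ Subgroup.center (DihedralGroup n) →
        Nat.card (Subgroup.centralizer ({x} : Set (DihedralGroup n))) <
          (k + 1) + Nat.card (Subgroup.center (DihedralGroup n))} = n - 1 := by
  haveI : NeZero n := ⟨by omega⟩
  haveI : Fact (1 < n) := ⟨by omega⟩
  have hc : Subgroup.center (DihedralGroup n) = ⊥ := center_eq_bot hodd hn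
  have hcard : Nat.card (Subgroup.center (DihedralGroup n)) = 1 := by
    rw [hc]; exact Subgroup.card_bot
  have hr : ∀ i : ZMod n, i ≠ 0 →
      Nat.card (Subgroup.centralizer ({r i} : Set (DihedralGroup n))) = n := by
    intro i hi
    rw [centralizer_r hodd hn hi, Nat.card_zpowers, orderOf_r_one]
  have hs : ∀ i : ZMod n,
      Nat.card (Subgroup.centralizer ({sr i} : Set (DihedralGroup n))) = 2 := by
    intro i
    rw [centralizer_sr hodd hn i, Nat.card_zpowers, orderOf_sr]
  have key : ∀ k : ℕ,
      (∀ x : DihedralGroup n, x ∉ Subgroup.center (DihedralGroup n) →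
        Nat.card (Subgroup.centralizer ({x} : Set (DihedralGroup n))) <
          (k + 1) + Nat.card (Subgroup.center (DihedralGroup n))) ↔ n - 1 ≤ k := by
    intro k
    constructor
    · intro h
      have h1 : (r 1 : DihedralGroup n) ∉ Subgroup.center (DihedralGroup n) := by
        rw [hc, Subgroup.mem_bot, one_def]
        intro he
        have : (1 : ZMod n) = 0 := by injection he
        exact one_ne_zero this
      have := h (r 1) h1
      rw [hr 1 one_ne_zero, hcard] at this
      omega
    · intro hk x hx
      rw [hc, Subgroup.mem_bot] at hx
      rw [hcard]
      cases x with
      | r i =>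
        have hi : i ≠ 0 := fun h => hx (by rw [h, ← one_def])
        rw [hr i hi]; omega
      | sr i => rw [hs i]; omega
  refine ⟨key, ?_⟩
  apply le_antisymm
  · exact Nat.sInf_le ((key (n - 1)).mpr le_rfl)
  · exact le_csInf ⟨n - 1, (key (n - 1)).mpr le_rfl⟩ fun b hb => (key b).mp hb
end

section
/- Let n be an even natural number with n ≥ 4 and let G = D_{2n} be the dihedral group of order 2n. Then for every natural number k, G is strong k-star free (i.e., |C_G(x)| < (k+1) + |Z(G)| for all noncentral x in G) if and only if k ≥ n - 2. Equivalently, the strong star number of D_{2n} is S(D_{2n}) = n - 2. -/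
open DihedralGroup

section aux

variable {n : ℕ}

lemma aux_two_mul_eq_zero {m : ℕ} (hm : n = m + m) (hn : 4 ≤ n) (i : ZMod n) :
    i + i = 0 ↔ i = 0 ∨ i = (m : ZMod n) := by
  have hn0 : NeZero n := ⟨by omega⟩
  constructor
  · intro h
    have hv : ((i.val : ℕ) : ZMod n) = i := ZMod.natCast_rightInverse i
    have h2 : ((i.val + i.val : ℕ) : ZMod n) = 0 := by
      rw [Nat.cast_add, hv]; exact h
    rw [ZMod.natCast_eq_zero_iff] at h2
    have hlt : i.val < n := ZMod.val_lt i
    rcases h2 with ⟨c, hc⟩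
    have hc2 : c < 2 := by by_contra h'; push_neg at h'; nlinarith
    interval_cases c
    · left
      have h3 : i.val = 0 := by omega
      rw [← hv, h3, Nat.cast_zero]
    · right
      have h3 : i.val = m := by omega
      rw [← hv, h3]
  · rintro (rfl | rfl)
    · simp
    · rw [← Nat.cast_add, ← hm, ZMod.natCast_self]

lemma aux_one_ne_zero (hn : 4 ≤ n) : (1 : ZMod n) ≠ 0 := by
  have hn0 : NeZero n := ⟨by omega⟩
  intro h
  have h1 : ((1 : ℕ) : ZMod n) = 0 := by simpa using h
  rw [ZMod.natCast_eq_zero_iff] at h1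
  have := Nat.le_of_dvd one_pos h1
  omega

lemma aux_m_ne_zero {m : ℕ} (hm : n = m + m) (hn : 4 ≤ n) : (m : ZMod n) ≠ 0 := by
  have hn0 : NeZero n := ⟨by omega⟩
  rw [Ne, ZMod.natCast_eq_zero_iff]
  intro h
  exact absurd (Nat.le_of_dvd (by omega) h) (by omega)

lemma aux_center_eq {m : ℕ} (hm : n = m + m) (hn : 4 ≤ n) :
    (Subgroup.center (DihedralGroup n) : Set (DihedralGroup n)) =
      {(1 : DihedralGroup n), r (m : ZMod n)} := by
  ext x
  simp only [SetLike.mem_coe, Subgroup.mem_center_iff, Set.mem_insert_iff,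
    Set.mem_singleton_iff]
  constructor
  · intro h
    cases x with
    | r i =>
      have := h (sr 0)
      rw [sr_mul_r, r_mul_sr, zero_add, zero_sub] at this
      have hi : i = -i := by injection this
      have h2 : i + i = 0 := by linear_combination hi
      rcases (aux_two_mul_eq_zero hm hn i).mp h2 with h0 | h0
      · left; rw [h0, one_def]
      · right; rw [h0]
    | sr i =>
      exfalso
      have := h (r 1)
      rw [r_mul_sr, sr_mul_r] at this
      have hi : i - 1 = i + 1 := by injection this
      have h2 : (1 : ZMod n) + 1 = 0 := by linear_combination -hi
      rcases (aux_two_mul_eq_zero hm hn 1).mp h2 with h0 | h0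
      · exact aux_one_ne_zero hn h0
      · -- (1 : ZMod n) = m : impossible since m ≥ 2
        have hn0 : NeZero n := ⟨by omega⟩
        have : ((1 : ℕ) : ZMod n) = ((m : ℕ) : ZMod n) := by simpa using h0
        rw [ZMod.natCast_eq_natCast_iff] at this
        have := (Nat.modEq_iff_dvd' (by omega)).mp this
        have := Nat.le_of_dvd (by omega) this
        omega
  · rintro (rfl | rfl)
    · intro g; rw [one_mul, mul_one]
    · rintro (j | j)
      · rw [r_mul_r, r_mul_r, add_comm]
      · rw [sr_mul_r, r_mul_sr]
        congr 1
        have h2 : (m : ZMod n) + (m : ZMod n) = 0 := by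
          rw [← Nat.cast_add, ← hm, ZMod.natCast_self]
        linear_combination h2

lemma aux_card_center {m : ℕ} (hm : n = m + m) (hn : 4 ≤ n) :
    Nat.card (Subgroup.center (DihedralGroup n)) = 2 := by
  have h1 : (1 : DihedralGroup n) ≠ r (m : ZMod n) := by
    rw [one_def]
    intro h
    exact aux_m_ne_zero hm hn (by injection h.symm)
  calc Nat.card (Subgroup.center (DihedralGroup n))
      = Nat.card ((Subgroup.center (DihedralGroup n) : Set (DihedralGroup n))) := rfl
    _ = 2 := by
        rw [aux_center_eq hm hn, Nat.card_coe_set_eq, Set.ncard_pair h1]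

lemma aux_centralizer_r_one {m : ℕ} (hm : n = m + m) (hn : 4 ≤ n) :
    Nat.card (Subgroup.centralizer ({r 1} : Set (DihedralGroup n))) = n := by
  have hn0 : NeZero n := ⟨by omega⟩
  have h2 : (1 : ZMod n) + 1 ≠ 0 := by
    intro h
    rcases (aux_two_mul_eq_zero hm hn 1).mp h with h0 | h0
    · exact aux_one_ne_zero hn h0
    · have : ((1 : ℕ) : ZMod n) = ((m : ℕ) : ZMod n) := by simpa using h0
      rw [ZMod.natCast_eq_natCast_iff] at this
      have := (Nat.modEq_iff_dvd' (by omega)).mp this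
      have := Nat.le_of_dvd (by omega) this
      omega
  have hset : (Subgroup.centralizer ({r 1} : Set (DihedralGroup n)) : Set (DihedralGroup n)) =
      Set.range (r : ZMod n → DihedralGroup n) := by
    ext x
    simp only [SetLike.mem_coe, Subgroup.mem_centralizer_singleton_iff, Set.mem_range]
    cases x with
    | r i => simp [r_mul_r, add_comm]
    | sr i =>
      simp only [sr_mul_r, r_mul_sr]
      constructor
      · intro h
        have hi : i + 1 = i - 1 := by injection h
        exact absurd (by linear_combination hi) h2
      · rintro ⟨j, h⟩
        exact absurd h (by simp)
  calc Nat.card (Subgroup.centralizer ({r 1} : Set (DihedralGroup n)))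
      = Nat.card ((Subgroup.centralizer ({r 1} : Set (DihedralGroup n)) : Set (DihedralGroup n))) := rfl
    _ = Nat.card (ZMod n) := by
        rw [hset]
        exact Nat.card_range_of_injective (fun a b h => by injection h)
    _ = n := Nat.card_zmod n

end aux

/-- For even `n ≥ 4`, the dihedral group `D_{2n}` is strong `k`-star free
(i.e. `|C_G(x)| < (k+1) + |Z(G)|` for all noncentral `x`) iff `k ≥ n - 2`;
equivalently, its strong star number is `n - 2`. -/
theorem dihedral_even_strong_star_free (n : ℕ) (hn : 4 ≤ n) (heven : Even n) :
    (∀ k : ℕ,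
      (∀ x : DihedralGroup n, x ∉ Subgroup.center (DihedralGroup n) →
        Nat.card (Subgroup.centralizer ({x} : Set (DihedralGroup n))) <
          (k + 1) + Nat.card (Subgroup.center (DihedralGroup n))) ↔ n - 2 ≤ k) ∧
    sInf {k : ℕ | ∀ x : DihedralGroup n, x ∉ Subgroup.center (DihedralGroup n) →
        Nat.card (Subgroup.centralizer ({x} : Set (DihedralGroup n))) <
          (k + 1) + Nat.card (Subgroup.center (DihedralGroup n))} = n - 2 := by
  obtain ⟨m, hm⟩ := heven
  have hn0 : NeZero n := ⟨by omega⟩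
  have hZ := aux_card_center hm hn
  have key : ∀ k : ℕ,
      (∀ x : DihedralGroup n, x ∉ Subgroup.center (DihedralGroup n) →
        Nat.card (Subgroup.centralizer ({x} : Set (DihedralGroup n))) <
          (k + 1) + Nat.card (Subgroup.center (DihedralGroup n))) ↔ n - 2 ≤ k := by
    intro k
    constructor
    · intro h
      have hr1 : (r 1 : DihedralGroup n) ∉ Subgroup.center (DihedralGroup n) := by
        intro hmem
        have : (r 1 : DihedralGroup n) ∈
            (Subgroup.center (DihedralGroup n) : Set (DihedralGroup n)) := hmem
        rw [aux_center_eq hm hn] at this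
        rcases this with h0 | h0
        · rw [one_def] at h0
          exact aux_one_ne_zero hn (by injection h0)
        · have h1 : (1 : ZMod n) = (m : ZMod n) := by injection h0
          have : ((1 : ℕ) : ZMod n) = ((m : ℕ) : ZMod n) := by simpa using h1
          rw [ZMod.natCast_eq_natCast_iff] at this
          have := (Nat.modEq_iff_dvd' (by omega)).mp this
          have := Nat.le_of_dvd (by omega) this
          omega
      have := h (r 1) hr1
      rw [aux_centralizer_r_one hm hn, hZ] at this
      omega
    · intro hk x hx
      rw [hZ]
      -- centralizer is a proper subgroup, so its card is ≤ n
      set H := Subgroup.centralizer ({x} : Set (DihedralGroup n)) with hH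
      have hne : H ≠ ⊤ := by
        intro htop
        apply hx
        rw [Subgroup.mem_center_iff]
        intro g
        have : g ∈ H := htop ▸ Subgroup.mem_top g
        exact (Subgroup.mem_centralizer_singleton_iff.mp this)
      have hdvd : Nat.card H ∣ Nat.card (DihedralGroup n) := Subgroup.card_subgroup_dvd_card H
      have hcardG : Nat.card (DihedralGroup n) = 2 * n := DihedralGroup.nat_card
      have hltcard : Nat.card H ≠ 2 * n := by
        intro hEq
        exact hne (Subgroup.eq_top_of_card_eq H (by rw [hEq, hcardG]))
      rw [hcardG] at hdvd
      rcases hdvd with ⟨c, hc⟩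
      have hHpos : 0 < Nat.card H := Nat.card_pos
      have : Nat.card H ≤ n := by
        rcases Nat.lt_or_ge c 2 with hc2 | hc2
        · interval_cases c <;> omega
        · nlinarith
      omega
  refine ⟨key, ?_⟩
  have : {k : ℕ | ∀ x : DihedralGroup n, x ∉ Subgroup.center (DihedralGroup n) →
        Nat.card (Subgroup.centralizer ({x} : Set (DihedralGroup n))) <
          (k + 1) + Nat.card (Subgroup.center (DihedralGroup n))} = Set.Ici (n - 2) := by
    ext k
    exact key k
  rw [this, csInf_Ici]
end
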